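/- arXiv:2208.08401 — 8 statements merged into one kernel-verified Lean document; each statement's English description precedes it below -/
import Mathlib

section
/- Let n ≥ 1 and let S₁,…,S_{n+1} be real-valued random variables that are exchangeable, i.e. for every permutation π of {1,…,n+1} the vector (S_{π(1)},…,S_{π(n+1)}) has the same joint distribution as (S₁,…,S_{n+1}). Fix α ∈ (0,1) and define the empirical quantile Q := inf{x ∈ ℝ : (1/(n+1))·#{i ∈ {1,…,n+1} : S_i ≤ x} ≥ 1−α}. Then ℙ(S_{n+1} ≤ Q) ≥ 1 − α. -/
open MeasureTheory Finset

namespace ConformalAux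

/-- The quantile superlevel set. -/
def Tset (m : ℕ) (t : ℝ) (v : Fin (m + 1) → ℝ) : Set ℝ :=
  {x : ℝ | t ≤ ((m : ℝ) + 1)⁻¹ *
    ((Finset.univ.filter (fun i : Fin (m + 1) => v i ≤ x)).card : ℝ)}

lemma cnt_mono (m : ℕ) (v : Fin (m + 1) → ℝ) {x y : ℝ} (hxy : x ≤ y) :
    ((Finset.univ.filter (fun i : Fin (m + 1) => v i ≤ x)).card : ℝ)
      ≤ ((Finset.univ.filter (fun i : Fin (m + 1) => v i ≤ y)).card : ℝ) := by
  have hsub : (Finset.univ.filter (fun i : Fin (m + 1) => v i ≤ x))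
      ⊆ (Finset.univ.filter (fun i : Fin (m + 1) => v i ≤ y)) := by
    intro i hi
    simp only [Finset.mem_filter, Finset.mem_univ, true_and] at hi ⊢
    linarith
  exact_mod_cast Finset.card_le_card hsub

lemma Tset_upward (m : ℕ) (t : ℝ) (v : Fin (m + 1) → ℝ) {x y : ℝ}
    (hx : x ∈ Tset m t v) (hxy : x ≤ y) : y ∈ Tset m t v := by
  rw [Tset, Set.mem_setOf_eq] at hx ⊢
  refine le_trans hx ?_
  have h0 : (0:ℝ) ≤ ((m : ℝ) + 1)⁻¹ := by positivity
  exact mul_le_mul_of_nonneg_left (cnt_mono m v hxy) h0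

lemma Tset_nonempty (m : ℕ) (t : ℝ) (ht1 : t ≤ 1) (v : Fin (m + 1) → ℝ) :
    (Tset m t v).Nonempty := by
  have hne : (Finset.univ : Finset (Fin (m + 1))).Nonempty := Finset.univ_nonempty
  refine ⟨Finset.univ.sup' hne v, ?_⟩
  have hall : (Finset.univ.filter (fun i : Fin (m + 1) => v i ≤ Finset.univ.sup' hne v))
      = Finset.univ := by
    apply Finset.filter_true_of_mem
    intro i _
    exact Finset.le_sup' v (Finset.mem_univ i)
  show t ≤ ((m : ℝ) + 1)⁻¹ * _
  rw [hall]
  simp only [Finset.card_univ, Fintype.card_fin]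
  have hm : ((m : ℝ) + 1) ≠ 0 := by positivity
  rw [Nat.cast_add, Nat.cast_one, inv_mul_cancel₀ hm]
  exact ht1

lemma Tset_bddBelow (m : ℕ) (t : ℝ) (ht0 : 0 < t) (v : Fin (m + 1) → ℝ) :
    BddBelow (Tset m t v) := by
  have hne : (Finset.univ : Finset (Fin (m + 1))).Nonempty := Finset.univ_nonempty
  refine ⟨Finset.univ.inf' hne v, ?_⟩
  intro x hx
  have hpos : 0 < ((Finset.univ.filter (fun i : Fin (m + 1) => v i ≤ x)).card : ℝ) := by
    by_contra h
    push_neg at h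
    have h0 : ((Finset.univ.filter (fun i : Fin (m + 1) => v i ≤ x)).card : ℝ) = 0 :=
      le_antisymm h (Nat.cast_nonneg _)
    have hx' := hx
    rw [Tset, Set.mem_setOf_eq, h0, mul_zero] at hx'
    linarith
  have hcard : 0 < (Finset.univ.filter (fun i : Fin (m + 1) => v i ≤ x)).card := by
    exact_mod_cast hpos
  obtain ⟨i, hi⟩ := Finset.card_pos.mp hcard
  have hvi : v i ≤ x := (Finset.mem_filter.mp hi).2
  exact le_trans (Finset.inf'_le v (Finset.mem_univ i)) hvi

lemma sInf_mem_Tset (m : ℕ) (t : ℝ) (ht0 : 0 < t) (ht1 : t ≤ 1) (v : Fin (m + 1) → ℝ) :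
    sInf (Tset m t v) ∈ Tset m t v := by
  set q := sInf (Tset m t v) with hq
  by_contra hqn
  set G := Finset.univ.filter (fun i : Fin (m + 1) => q < v i) with hG
  set ε : ℝ := if hGe : G.Nonempty then G.inf' hGe v - q else 1 with hε
  have hεpos : 0 < ε := by
    rw [hε]
    split_ifs with hGe
    · have : q < G.inf' hGe v := by
        rw [Finset.lt_inf'_iff]
        intro i hi
        exact (Finset.mem_filter.mp hi).2
      linarith
    · exact one_pos
  have hsame : ∀ x, q ≤ x → x < q + ε →
      (Finset.univ.filter (fun i : Fin (m + 1) => v i ≤ x))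
        = (Finset.univ.filter (fun i : Fin (m + 1) => v i ≤ q)) := by
    intro x hqx hxε
    apply Finset.filter_congr
    intro i _
    constructor
    · intro hvix
      by_contra hviq
      push_neg at hviq
      have hiG : i ∈ G := Finset.mem_filter.mpr ⟨Finset.mem_univ i, hviq⟩
      have hGe : G.Nonempty := ⟨i, hiG⟩
      have hεeq : ε = G.inf' hGe v - q := by rw [hε, dif_pos hGe]
      have : G.inf' hGe v ≤ v i := Finset.inf'_le v hiG
      linarith
    · intro hviq
      exact le_trans hviq hqx
  obtain ⟨x, hxT, hxlt⟩ := exists_lt_of_csInf_lt (Tset_nonempty m t ht1 v)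
    (show sInf (Tset m t v) < q + ε by rw [← hq]; linarith)
  have hqx : q ≤ x := csInf_le (Tset_bddBelow m t ht0 v) hxT
  have : q ∈ Tset m t v := by
    have hfx := hsame x hqx hxlt
    rw [Tset, Set.mem_setOf_eq] at hxT ⊢
    rwa [hfx] at hxT
  exact hqn this

lemma Tset_eq_Ici (m : ℕ) (t : ℝ) (ht0 : 0 < t) (ht1 : t ≤ 1) (v : Fin (m + 1) → ℝ) :
    Tset m t v = Set.Ici (sInf (Tset m t v)) := by
  ext x
  constructor
  · intro hx
    exact csInf_le (Tset_bddBelow m t ht0 v) hx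
  · intro hx
    exact Tset_upward m t v (sInf_mem_Tset m t ht0 ht1 v) hx

lemma cnt_perm (m : ℕ) (v : Fin (m + 1) → ℝ) (π : Equiv.Perm (Fin (m + 1))) (x : ℝ) :
    (Finset.univ.filter (fun i : Fin (m + 1) => v (π i) ≤ x)).card
      = (Finset.univ.filter (fun i : Fin (m + 1) => v i ≤ x)).card := by
  apply Finset.card_bij' (fun a _ => π a) (fun b _ => π.symm b)
  · intro a ha
    simp only [Finset.mem_filter, Finset.mem_univ, true_and] at ha ⊢
    exact ha
  · intro b hb
    simp only [Finset.mem_filter, Finset.mem_univ, true_and, Equiv.apply_symm_apply] at hb ⊢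
    exact hb
  · intro a _; simp
  · intro b _; simp

lemma card_filter_perm {m : ℕ} (π : Equiv.Perm (Fin m)) (p : Fin m → Prop) [DecidablePred p] :
    (Finset.univ.filter (fun i : Fin m => p (π i))).card
      = (Finset.univ.filter p).card := by
  apply Finset.card_bij' (fun a _ => π a) (fun b _ => π.symm b)
  · intro a ha
    simp only [Finset.mem_filter, Finset.mem_univ, true_and] at ha ⊢
    exact ha
  · intro b hb
    simp only [Finset.mem_filter, Finset.mem_univ, true_and, Equiv.apply_symm_apply] at hb ⊢
    exact hb
  · intro a _; simp
  · intro b _; simp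

/-- Tie-robust characterization: `v i` is below the quantile iff its strict rank is small. -/
lemma le_sInf_iff_strict {m : ℕ} (t : ℝ) (ht0 : 0 < t) (ht1 : t ≤ 1)
    (v : Fin (m + 1) → ℝ) (i : Fin (m + 1)) :
    v i ≤ sInf (Tset m t v) ↔
      ((m : ℝ) + 1)⁻¹ * ((Finset.univ.filter (fun j : Fin (m + 1) => v j < v i)).card : ℝ) < t := by
  have hinv : (0:ℝ) < ((m : ℝ) + 1)⁻¹ := by positivity
  constructor
  · intro hle
    by_contra hcon
    push_neg at hcon
    -- the strict filter is nonempty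
    have hpos : 0 < ((Finset.univ.filter (fun j : Fin (m + 1) => v j < v i)).card : ℝ) := by
      by_contra h0
      push_neg at h0
      have : ((Finset.univ.filter (fun j : Fin (m + 1) => v j < v i)).card : ℝ) = 0 :=
        le_antisymm h0 (Nat.cast_nonneg _)
      rw [this, mul_zero] at hcon
      linarith
    have hcard : 0 < (Finset.univ.filter (fun j : Fin (m + 1) => v j < v i)).card := by
      exact_mod_cast hpos
    set G := Finset.univ.filter (fun j : Fin (m + 1) => v j < v i) with hG
    have hGe : G.Nonempty := Finset.card_pos.mp hcard
    set x := G.sup' hGe v with hx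
    have hxlt : x < v i := by
      rw [hx, Finset.sup'_lt_iff]
      intro j hj
      exact (Finset.mem_filter.mp hj).2
    have hsub : G ⊆ Finset.univ.filter (fun j : Fin (m + 1) => v j ≤ x) := by
      intro j hj
      simp only [Finset.mem_filter, Finset.mem_univ, true_and]
      exact Finset.le_sup' v hj
    have hxT : x ∈ Tset m t v := by
      rw [Tset, Set.mem_setOf_eq]
      refine le_trans hcon ?_
      apply mul_le_mul_of_nonneg_left _ (le_of_lt hinv)
      exact_mod_cast Finset.card_le_card hsub
    have := csInf_le (Tset_bddBelow m t ht0 v) hxT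
    linarith
  · intro hlt
    apply le_csInf (Tset_nonempty m t ht1 v)
    intro x hxT
    by_contra hcon
    push_neg at hcon
    have hsub : Finset.univ.filter (fun j : Fin (m + 1) => v j ≤ x)
        ⊆ Finset.univ.filter (fun j : Fin (m + 1) => v j < v i) := by
      intro j hj
      simp only [Finset.mem_filter, Finset.mem_univ, true_and] at hj ⊢
      exact lt_of_le_of_lt hj hcon
    rw [Tset, Set.mem_setOf_eq] at hxT
    have : ((m : ℝ) + 1)⁻¹ * ((Finset.univ.filter (fun j : Fin (m + 1) => v j ≤ x)).card : ℝ)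
        ≤ ((m : ℝ) + 1)⁻¹ * ((Finset.univ.filter (fun j : Fin (m + 1) => v j < v i)).card : ℝ) := by
      apply mul_le_mul_of_nonneg_left _ (le_of_lt hinv)
      exact_mod_cast Finset.card_le_card hsub
    linarith

end ConformalAux

open MeasureTheory

/-- Conformal prediction coverage lower bound: for exchangeable real-valued random
variables `S 0, …, S n` (with `n ≥ 1`), the last one lies below the `1-α` empirical
quantile of all `n+1` values with probability at least `1-α`. -/
theorem conformal_coverage_lower_bound
    {Ω : Type*} [MeasurableSpace Ω] (μ : Measure Ω) [IsProbabilityMeasure μ]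
    (n : ℕ) (hn : 1 ≤ n)
    (S : Fin (n + 1) → Ω → ℝ) (hSmeas : ∀ i, Measurable (S i))
    (hexch : ∀ π : Equiv.Perm (Fin (n + 1)),
      Measure.map (fun ω => fun i => S (π i) ω) μ
        = Measure.map (fun ω => fun i => S i ω) μ)
    (α : ℝ) (hα : α ∈ Set.Ioo (0 : ℝ) 1)
    (Q : Ω → ℝ)
    (hQ : ∀ ω, Q ω = sInf {x : ℝ |
      1 - α ≤ ((n : ℝ) + 1)⁻¹ *
        ((Finset.univ.filter (fun i : Fin (n + 1) => S i ω ≤ x)).card : ℝ)}) :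
    1 - α ≤ (μ {ω | S (Fin.last n) ω ≤ Q ω}).toReal := by
  obtain ⟨hα0, hα1⟩ := hα
  set t : ℝ := 1 - α with ht
  have ht0 : 0 < t := by simp only [ht]; linarith
  have ht1 : t ≤ 1 := by simp only [ht]; linarith
  have hnpos : (0:ℝ) < (n : ℝ) + 1 := by positivity
  have hQ' : ∀ ω, Q ω = sInf (ConformalAux.Tset n t (fun j => S j ω)) := fun ω => hQ ω
  -- the strict-rank events
  set E : Fin (n + 1) → Set Ω := fun i => {ω | ((n : ℝ) + 1)⁻¹ *
    ((Finset.univ.filter (fun j : Fin (n + 1) => S j ω < S i ω)).card : ℝ) < t} with hE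
  -- key pointwise equivalence : ω ∈ E i ↔ S i ω ≤ Q ω
  have hEiff : ∀ i ω, ω ∈ E i ↔ S i ω ≤ Q ω := by
    intro i ω
    rw [hQ' ω, ConformalAux.le_sInf_iff_strict t ht0 ht1 (fun j => S j ω) i]
    exact Iff.rfl
  -- measurability of the events
  have hEmeas : ∀ i, MeasurableSet (E i) := by
    intro i
    have hcnt : Measurable (fun ω =>
        ((Finset.univ.filter (fun j : Fin (n + 1) => S j ω < S i ω)).card : ℝ)) := by
      have heq : (fun ω => ((Finset.univ.filter (fun j : Fin (n + 1) => S j ω < S i ω)).card : ℝ))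
          = fun ω => ∑ j : Fin (n + 1), if S j ω < S i ω then (1 : ℝ) else 0 := by
        funext ω; rw [Finset.sum_boole]
      rw [heq]
      apply Finset.measurable_sum
      intro j _
      exact Measurable.ite (measurableSet_lt (hSmeas j) (hSmeas i)) measurable_const
        measurable_const
    have : E i = (fun ω => ((n : ℝ) + 1)⁻¹ *
        ((Finset.univ.filter (fun j : Fin (n + 1) => S j ω < S i ω)).card : ℝ)) ⁻¹'
        Set.Iio t := rfl
    rw [this]
    exact (hcnt.const_mul _) measurableSet_Iio
  -- equal probabilities by exchangeability
  have hVmeas : Measurable (fun ω => fun i : Fin (n + 1) => S i ω) :=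
    measurable_pi_lambda _ hSmeas
  set A : Set (Fin (n + 1) → ℝ) := {v | ((n : ℝ) + 1)⁻¹ *
    ((Finset.univ.filter (fun j : Fin (n + 1) => v j < v (Fin.last n))).card : ℝ) < t} with hA
  have hAmeas : MeasurableSet A := by
    have hf : Measurable (fun v : Fin (n + 1) → ℝ =>
        ((Finset.univ.filter (fun j : Fin (n + 1) => v j < v (Fin.last n))).card : ℝ)) := by
      have heq : (fun v : Fin (n + 1) → ℝ =>
          ((Finset.univ.filter (fun j : Fin (n + 1) => v j < v (Fin.last n))).card : ℝ))
          = fun v => ∑ j : Fin (n + 1), if v j < v (Fin.last n) then (1 : ℝ) else 0 := by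
        funext v; rw [Finset.sum_boole]
      rw [heq]
      apply Finset.measurable_sum
      intro j _
      exact Measurable.ite (measurableSet_lt (measurable_pi_apply j)
        (measurable_pi_apply (Fin.last n))) measurable_const measurable_const
    have : A = (fun v : Fin (n + 1) → ℝ => ((n : ℝ) + 1)⁻¹ *
        ((Finset.univ.filter (fun j : Fin (n + 1) => v j < v (Fin.last n))).card : ℝ)) ⁻¹'
        Set.Iio t := rfl
    rw [this]
    exact (hf.const_mul _) measurableSet_Iio
  have hEeq : ∀ i, μ (E i) = μ (E (Fin.last n)) := by
    intro i
    set π : Equiv.Perm (Fin (n + 1)) := Equiv.swap i (Fin.last n) with hπ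
    have hVπmeas : Measurable (fun ω => fun j : Fin (n + 1) => S (π j) ω) :=
      measurable_pi_lambda _ (fun j => hSmeas (π j))
    have h1 : (fun ω => fun j : Fin (n + 1) => S (π j) ω) ⁻¹' A = E i := by
      ext ω
      simp only [Set.mem_preimage, hA, Set.mem_setOf_eq, hE]
      have hlast : π (Fin.last n) = i := Equiv.swap_apply_right i (Fin.last n)
      simp only [hlast]
      rw [ConformalAux.card_filter_perm π (fun j => S j ω < S i ω)]
    have h2 : (fun ω => fun j : Fin (n + 1) => S j ω) ⁻¹' A = E (Fin.last n) := rfl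
    calc μ (E i) = μ ((fun ω => fun j : Fin (n + 1) => S (π j) ω) ⁻¹' A) := by rw [h1]
      _ = Measure.map (fun ω => fun j : Fin (n + 1) => S (π j) ω) μ A := by
          rw [Measure.map_apply hVπmeas hAmeas]
      _ = Measure.map (fun ω => fun j : Fin (n + 1) => S j ω) μ A := by rw [hexch π]
      _ = μ ((fun ω => fun j : Fin (n + 1) => S j ω) ⁻¹' A) := by
          rw [Measure.map_apply hVmeas hAmeas]
      _ = μ (E (Fin.last n)) := by rw [h2]
  -- pointwise lower bound on the sum of indicators
  have hpt : ∀ ω, t * ((n : ℝ) + 1) ≤ ∑ i : Fin (n + 1), (E i).indicator (fun _ => (1:ℝ)) ω := by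
    intro ω
    have hsum : ∑ i : Fin (n + 1), (E i).indicator (fun _ => (1:ℝ)) ω
        = ((Finset.univ.filter (fun i : Fin (n + 1) => S i ω ≤ Q ω)).card : ℝ) := by
      rw [← Finset.sum_boole]
      apply Finset.sum_congr rfl
      intro i _
      rw [Set.indicator_apply]
      by_cases h : ω ∈ E i
      · rw [if_pos h, if_pos ((hEiff i ω).mp h)]
      · rw [if_neg h, if_neg (fun hc => h ((hEiff i ω).mpr hc))]
    rw [hsum]
    have hQT : Q ω ∈ ConformalAux.Tset n t (fun j => S j ω) := by
      rw [hQ' ω]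
      exact ConformalAux.sInf_mem_Tset n t ht0 ht1 (fun j => S j ω)
    rw [ConformalAux.Tset, Set.mem_setOf_eq] at hQT
    have := mul_le_mul_of_nonneg_left hQT (le_of_lt hnpos)
    rw [← mul_assoc, mul_inv_cancel₀ (ne_of_gt hnpos), one_mul] at this
    linarith [this]
  -- integrate
  have hint : ∀ i : Fin (n + 1), Integrable ((E i).indicator (fun _ => (1:ℝ))) μ :=
    fun i => (integrable_const (1:ℝ)).indicator (hEmeas i)
  have hsumint : Integrable (fun ω => ∑ i : Fin (n + 1), (E i).indicator (fun _ => (1:ℝ)) ω) μ :=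
    integrable_finset_sum _ (fun i _ => hint i)
  have hmono : ∫ ω, (t * ((n : ℝ) + 1)) ∂μ
      ≤ ∫ ω, ∑ i : Fin (n + 1), (E i).indicator (fun _ => (1:ℝ)) ω ∂μ :=
    integral_mono (integrable_const _) hsumint hpt
  rw [integral_const, probReal_univ, one_smul] at hmono
  rw [integral_finset_sum _ (fun i _ => hint i)] at hmono
  have hind : ∀ i : Fin (n + 1), ∫ ω, (E i).indicator (fun _ => (1:ℝ)) ω ∂μ
      = (μ (E i)).toReal := by
    intro i
    rw [integral_indicator_const (1:ℝ) (hEmeas i), smul_eq_mul, mul_one, Measure.real]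
  have hsum2 : ∑ i : Fin (n + 1), ∫ ω, (E i).indicator (fun _ => (1:ℝ)) ω ∂μ
      = ((n : ℝ) + 1) * (μ (E (Fin.last n))).toReal := by
    rw [Finset.sum_congr rfl (fun i _ => by rw [hind i, hEeq i])]
    rw [Finset.sum_const, Finset.card_univ, Fintype.card_fin, nsmul_eq_mul]
    push_cast
    ring
  rw [hsum2] at hmono
  -- conclude
  have hset : {ω | S (Fin.last n) ω ≤ Q ω} = E (Fin.last n) := by
    ext ω
    exact (hEiff (Fin.last n) ω).symm
  rw [hset]
  have := (mul_le_mul_iff_of_pos_left hnpos).mp (by linarith [hmono] : ((n:ℝ)+1) * t ≤ ((n:ℝ)+1) * (μ (E (Fin.last n))).toReal)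
  linarith [this]
end

section
/- Let n ≥ 1 and let S₁,…,S_{n+1} be real-valued exchangeable random variables such that, with probability one, all the values S₁,…,S_{n+1} are distinct. Fix α ∈ (0,1) and define the empirical quantile Q := inf{x ∈ ℝ : (1/(n+1))·#{i ∈ {1,…,n+1} : S_i ≤ x} ≥ 1−α}. Then ℙ(S_{n+1} ≤ Q) ≤ 1 − α + 1/(n+1). -/
open MeasureTheory
open scoped ENNReal

namespace ConformalAux

variable {n : ℕ}

/-- number of coordinates strictly below coordinate `j` -/
noncomputable def cnt (v : Fin (n + 1) → ℝ) (j : Fin (n + 1)) : ℕ :=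
  (Finset.univ.filter (fun i => v i < v j)).card

lemma cnt_le (v : Fin (n + 1) → ℝ) (j : Fin (n + 1)) : cnt v j ≤ n := by
  have hsub : Finset.univ.filter (fun i => v i < v j) ⊆ Finset.univ.erase j := by
    intro i hi
    simp only [Finset.mem_filter, Finset.mem_univ, true_and] at hi
    refine Finset.mem_erase.2 ⟨?_, Finset.mem_univ _⟩
    rintro rfl; exact lt_irrefl _ hi
  have h := Finset.card_le_card hsub
  have : (Finset.univ.erase j).card = n := by
    rw [Finset.card_erase_of_mem (Finset.mem_univ j), Finset.card_univ, Fintype.card_fin]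
    omega
  unfold cnt
  omega

lemma cnt_injective {v : Fin (n + 1) → ℝ} (hv : Function.Injective v) :
    Function.Injective (cnt v) := by
  have key : ∀ j j' : Fin (n + 1), v j < v j' → cnt v j < cnt v j' := by
    intro j j' h
    apply Finset.card_lt_card
    rw [Finset.ssubset_def]
    constructor
    · intro i hi
      simp only [Finset.mem_filter, Finset.mem_univ, true_and] at hi ⊢
      exact hi.trans h
    · intro hsub
      have hj := hsub (Finset.mem_filter.2 ⟨Finset.mem_univ j, h⟩)
      simp only [Finset.mem_filter] at hj
      exact lt_irrefl _ hj.2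
  intro j j' h
  by_contra hne
  rcases lt_trichotomy (v j) (v j') with hlt | heq | hgt
  · exact absurd h (Nat.ne_of_lt (key _ _ hlt))
  · exact hne (hv heq)
  · exact absurd h.symm (Nat.ne_of_lt (key _ _ hgt))

lemma count_filter_cnt {v : Fin (n + 1) → ℝ} (hv : Function.Injective v) (m : ℕ) :
    (Finset.univ.filter (fun j => cnt v j < m)).card = min m (n + 1) := by
  classical
  have hinj := cnt_injective hv
  have himg : Finset.univ.image (cnt v) = Finset.range (n + 1) := by
    apply Finset.eq_of_subset_of_card_le
    · intro x hx
      simp only [Finset.mem_image] at hx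
      obtain ⟨j, _, rfl⟩ := hx
      exact Finset.mem_range.2 (Nat.lt_succ_of_le (cnt_le v j))
    · rw [Finset.card_range, Finset.card_image_of_injective _ hinj, Finset.card_univ,
        Fintype.card_fin]
  calc (Finset.univ.filter (fun j => cnt v j < m)).card
      = ((Finset.univ.filter (fun j => cnt v j < m)).image (cnt v)).card :=
        (Finset.card_image_of_injective _ hinj).symm
    _ = ((Finset.univ.image (cnt v)).filter (fun x => x < m)).card := by
        rw [Finset.filter_image]
    _ = ((Finset.range (n + 1)).filter (fun x => x < m)).card := by rw [himg]
    _ = min m (n + 1) := by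
        have : (Finset.range (n + 1)).filter (fun x => x < m) = Finset.range (min m (n + 1)) := by
          ext x
          simp only [Finset.mem_filter, Finset.mem_range, Nat.lt_min]
          omega
        rw [this, Finset.card_range]

lemma measurable_cnt (j : Fin (n + 1)) :
    Measurable (fun v : Fin (n + 1) → ℝ => cnt v j) := by
  classical
  unfold cnt
  simp_rw [Finset.card_filter]
  apply Finset.measurable_sum
  intro i _
  exact Measurable.ite (measurableSet_lt (measurable_pi_apply i) (measurable_pi_apply j))
    measurable_const measurable_const

lemma le_quantile_iff (α : ℝ) (hα : α ∈ Set.Ioo (0 : ℝ) 1) (v : Fin (n + 1) → ℝ)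
    (j : Fin (n + 1)) :
    v j ≤ sInf {x : ℝ | 1 - α ≤ ((n : ℝ) + 1)⁻¹ *
        ((Finset.univ.filter (fun i : Fin (n + 1) => v i ≤ x)).card : ℝ)} ↔
      cnt v j < ⌈(1 - α) * ((n : ℝ) + 1)⌉₊ := by
  classical
  obtain ⟨hα0, hα1⟩ := hα
  set k := ⌈(1 - α) * ((n : ℝ) + 1)⌉₊ with hk
  have hpos : (0 : ℝ) < (n : ℝ) + 1 := by positivity
  set T := {x : ℝ | 1 - α ≤ ((n : ℝ) + 1)⁻¹ *
        ((Finset.univ.filter (fun i : Fin (n + 1) => v i ≤ x)).card : ℝ)} with hT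
  have hmem : ∀ x : ℝ, x ∈ T ↔
      k ≤ (Finset.univ.filter (fun i : Fin (n + 1) => v i ≤ x)).card := by
    intro x
    rw [hT, Set.mem_setOf_eq, inv_mul_eq_div, le_div_iff₀ hpos, hk, Nat.ceil_le]
  have hk1 : 1 ≤ k := by
    rw [hk]
    exact Nat.one_le_ceil_iff.2 (mul_pos (by linarith) hpos)
  have hne : (Finset.univ : Finset (Fin (n + 1))).Nonempty := Finset.univ_nonempty
  set M := Finset.univ.sup' hne v with hM
  have hMT : M ∈ T := by
    rw [hmem]
    have hfil : Finset.univ.filter (fun i : Fin (n + 1) => v i ≤ M) = Finset.univ := by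
      apply Finset.filter_true_of_mem
      intro i _
      exact Finset.le_sup' v (Finset.mem_univ i)
    rw [hfil, Finset.card_univ, Fintype.card_fin]
    rw [hk, Nat.ceil_le]
    push_cast
    nlinarith
  have hbdd : BddBelow T := by
    refine ⟨Finset.univ.inf' hne v, ?_⟩
    intro x hx
    rw [hmem] at hx
    have hcard : 0 < (Finset.univ.filter (fun i : Fin (n + 1) => v i ≤ x)).card := by omega
    obtain ⟨i, hi⟩ := Finset.card_pos.1 hcard
    simp only [Finset.mem_filter, Finset.mem_univ, true_and] at hi
    exact le_trans (Finset.inf'_le v (Finset.mem_univ i)) hi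
  constructor
  · intro h
    by_contra hc
    push_neg at hc
    have hFne : (Finset.univ.filter (fun i => v i < v j)).Nonempty := by
      rw [← Finset.card_pos]
      have : k ≤ (Finset.univ.filter (fun i => v i < v j)).card := hc
      omega
    set x := (Finset.univ.filter (fun i => v i < v j)).sup' hFne v with hx
    have hxT : x ∈ T := by
      rw [hmem]
      refine le_trans hc (Finset.card_le_card ?_)
      intro i hi
      simp only [Finset.mem_filter, Finset.mem_univ, true_and] at hi ⊢
      exact Finset.le_sup' v (Finset.mem_filter.2 ⟨Finset.mem_univ i, hi⟩)
    have hxlt : x < v j := by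
      obtain ⟨i, hi, hEq⟩ := Finset.exists_mem_eq_sup' hFne v
      rw [hx, hEq]
      exact (Finset.mem_filter.1 hi).2
    exact absurd (le_trans h (csInf_le hbdd hxT)) (not_le.2 hxlt)
  · intro h
    apply le_csInf ⟨M, hMT⟩
    intro x hx
    by_contra hlt
    push_neg at hlt
    rw [hmem] at hx
    have hsub : Finset.univ.filter (fun i : Fin (n + 1) => v i ≤ x) ⊆
        Finset.univ.filter (fun i => v i < v j) := by
      intro i hi
      simp only [Finset.mem_filter, Finset.mem_univ, true_and] at hi ⊢
      exact lt_of_le_of_lt hi hlt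
    have h2 := le_trans hx (Finset.card_le_card hsub)
    unfold cnt at h
    omega

lemma cnt_perm_s1 (π : Equiv.Perm (Fin (n + 1))) (v : Fin (n + 1) → ℝ) (j : Fin (n + 1)) :
    cnt (fun i => v (π i)) j = cnt v (π j) := by
  classical
  unfold cnt
  apply Finset.card_bij (fun i _ => π i)
  · intro i hi
    simp only [Finset.mem_filter, Finset.mem_univ, true_and] at hi ⊢
    exact hi
  · intro a _ b _ hab
    exact π.injective hab
  · intro b hb
    refine ⟨π.symm b, ?_, by simp⟩
    simp only [Finset.mem_filter, Finset.mem_univ, true_and] at hb ⊢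
    simpa using hb

end ConformalAux

/-- Conformal prediction coverage upper bound: for exchangeable real-valued random
variables `S 0, …, S n` (with `n ≥ 1`) that are almost surely pairwise distinct, the
last one lies below the `1-α` empirical quantile of all `n+1` values with probability
at most `1 - α + 1/(n+1)`. -/
theorem conformal_coverage_upper_bound
    {Ω : Type*} [MeasurableSpace Ω] (μ : Measure Ω) [IsProbabilityMeasure μ]
    (n : ℕ) (hn : 1 ≤ n)
    (S : Fin (n + 1) → Ω → ℝ) (hSmeas : ∀ i, Measurable (S i))
    (hexch : ∀ π : Equiv.Perm (Fin (n + 1)),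
      Measure.map (fun ω => fun i => S (π i) ω) μ
        = Measure.map (fun ω => fun i => S i ω) μ)
    (hdistinct : ∀ᵐ ω ∂μ, Function.Injective (fun i : Fin (n + 1) => S i ω))
    (α : ℝ) (hα : α ∈ Set.Ioo (0 : ℝ) 1)
    (Q : Ω → ℝ)
    (hQ : ∀ ω, Q ω = sInf {x : ℝ |
      1 - α ≤ ((n : ℝ) + 1)⁻¹ *
        ((Finset.univ.filter (fun i : Fin (n + 1) => S i ω ≤ x)).card : ℝ)}) :
    (μ {ω | S (Fin.last n) ω ≤ Q ω}).toReal ≤ 1 - α + 1 / ((n : ℝ) + 1) := by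
  classical
  obtain ⟨hα0, hα1⟩ := hα
  set k := ⌈(1 - α) * ((n : ℝ) + 1)⌉₊ with hk
  set f : Ω → (Fin (n + 1) → ℝ) := fun ω i => S i ω with hf
  have hfmeas : Measurable f := measurable_pi_lambda _ hSmeas
  set E : Fin (n + 1) → Set Ω := fun j => {ω | ConformalAux.cnt (f ω) j < k} with hE
  have hEmeas : ∀ j, MeasurableSet (E j) := by
    intro j
    have : E j = f ⁻¹' ((fun v => ConformalAux.cnt v j) ⁻¹' (Set.Iio k)) := rfl
    rw [this]
    exact hfmeas ((ConformalAux.measurable_cnt j) measurableSet_Iio)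
  have hQE : {ω | S (Fin.last n) ω ≤ Q ω} = E (Fin.last n) := by
    ext ω
    rw [Set.mem_setOf_eq, hQ ω]
    exact ConformalAux.le_quantile_iff α ⟨hα0, hα1⟩ (f ω) (Fin.last n)
  have hEeq : ∀ j, μ (E j) = μ (E (Fin.last n)) := by
    intro j
    set π := Equiv.swap j (Fin.last n) with hπ
    have hmeasB : MeasurableSet {v : Fin (n + 1) → ℝ | ConformalAux.cnt v (Fin.last n) < k} :=
      (ConformalAux.measurable_cnt (Fin.last n)) measurableSet_Iio
    have hπmeas : Measurable (fun ω => fun i => S (π i) ω) :=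
      measurable_pi_lambda _ (fun i => hSmeas (π i))
    have h1 := hexch π
    have h2 : (Measure.map (fun ω => fun i => S (π i) ω) μ)
          {v | ConformalAux.cnt v (Fin.last n) < k}
        = (Measure.map (fun ω => fun i => S i ω) μ)
          {v | ConformalAux.cnt v (Fin.last n) < k} := by rw [h1]
    rw [Measure.map_apply hπmeas hmeasB, Measure.map_apply hfmeas hmeasB] at h2
    have hpre : (fun ω => fun i => S (π i) ω) ⁻¹'
        {v | ConformalAux.cnt v (Fin.last n) < k} = E j := by
      ext ω
      simp only [Set.mem_preimage, Set.mem_setOf_eq, hE]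
      rw [show (fun i => S (π i) ω) = (fun i => f ω (π i)) from rfl,
        ConformalAux.cnt_perm_s1 π (f ω) (Fin.last n), Equiv.swap_apply_right]
    have hpre2 : f ⁻¹' {v | ConformalAux.cnt v (Fin.last n) < k} = E (Fin.last n) := rfl
    rw [hpre, hpre2] at h2
    exact h2
  have hsum : ∑ j : Fin (n + 1), μ (E j) = ((min k (n + 1) : ℕ) : ℝ≥0∞) := by
    calc ∑ j : Fin (n + 1), μ (E j)
        = ∑ j : Fin (n + 1), ∫⁻ ω, (E j).indicator (1 : Ω → ℝ≥0∞) ω ∂μ := by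
          refine Finset.sum_congr rfl (fun j _ => ?_)
          exact (lintegral_indicator_one (hEmeas j)).symm
      _ = ∫⁻ ω, ∑ j : Fin (n + 1), (E j).indicator (1 : Ω → ℝ≥0∞) ω ∂μ := by
          rw [lintegral_finset_sum]
          intro j _
          exact measurable_one.indicator (hEmeas j)
      _ = ∫⁻ _, ((min k (n + 1) : ℕ) : ℝ≥0∞) ∂μ := by
          apply lintegral_congr_ae
          filter_upwards [hdistinct] with ω hω
          have hcount := ConformalAux.count_filter_cnt (v := f ω) hω k
          have hstep : ∑ j : Fin (n + 1), (E j).indicator (1 : Ω → ℝ≥0∞) ω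
              = ((Finset.univ.filter (fun j => ConformalAux.cnt (f ω) j < k)).card : ℝ≥0∞) := by
            simp only [Set.indicator_apply, Pi.one_apply]
            rw [Finset.sum_boole]
            congr 1
          rw [hstep, hcount]
      _ = ((min k (n + 1) : ℕ) : ℝ≥0∞) := by
          simp [lintegral_const]
  have hconst : ∑ j : Fin (n + 1), μ (E j) = ((n + 1 : ℕ) : ℝ≥0∞) * μ (E (Fin.last n)) := by
    rw [Finset.sum_congr rfl (fun j _ => hEeq j), Finset.sum_const, Finset.card_univ,
      Fintype.card_fin, nsmul_eq_mul]
  have h3 : ((n + 1 : ℕ) : ℝ≥0∞) * μ (E (Fin.last n)) = ((min k (n + 1) : ℕ) : ℝ≥0∞) :=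
    hconst.symm.trans hsum
  have h4 : ((n : ℝ) + 1) * (μ (E (Fin.last n))).toReal = ((min k (n + 1) : ℕ) : ℝ) := by
    have := congrArg ENNReal.toReal h3
    rw [ENNReal.toReal_mul, ENNReal.toReal_natCast] at this
    simpa using this
  have hpos : (0 : ℝ) < (n : ℝ) + 1 := by positivity
  have hkk : ((min k (n + 1) : ℕ) : ℝ) ≤ (k : ℝ) := by
    exact_mod_cast min_le_left k (n + 1)
  have hkt : (k : ℝ) < (1 - α) * ((n : ℝ) + 1) + 1 := by
    rw [hk]
    exact Nat.ceil_lt_add_one (mul_nonneg (by linarith) (by positivity))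
  rw [hQE]
  have hEtoReal : (μ (E (Fin.last n))).toReal = ((min k (n + 1) : ℕ) : ℝ) / ((n : ℝ) + 1) := by
    rw [eq_div_iff hpos.ne']
    linarith [h4]
  rw [hEtoReal, div_le_iff₀ hpos]
  have hr : (1 - α + 1 / ((n : ℝ) + 1)) * ((n : ℝ) + 1) = (1 - α) * ((n : ℝ) + 1) + 1 := by
    field_simp
  rw [hr]
  linarith
end

section
/- Fix integers k ≥ 1 and T ≥ 1, reals η > 0 and σ with 0 < σ ≤ 1/2, and nonnegative losses ℓ_t^i ≥ 0 for 1 ≤ t ≤ T and 1 ≤ i ≤ k. Define weights recursively by w₁^i = 1 for all i, and w_{t+1}^i = (1−σ)·w_t^i·exp(−η ℓ_t^i) + (σ/k)·Σ_{j=1}^k w_t^j·exp(−η ℓ_t^j), and let p_t^i := w_t^i / Σ_{j=1}^k w_t^j. Then for every interval [r,s] ⊆ [1,T] and every 1 ≤ i ≤ k: Σ_{t=r}^s Σ_{j=1}^k p_t^j ℓ_t^j ≤ Σ_{t=r}^s ℓ_t^i + η·Σ_{t=r}^s Σ_{j=1}^k p_t^j (ℓ_t^j)² + (1/η)·(log(k/σ)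 + 2σ·(s−r+1)). -/
lemma exp_neg_le_quad (x : ℝ) (hx : 0 ≤ x) : Real.exp (-x) ≤ 1 - x + x ^ 2 := by
  have h1 : x + 1 ≤ Real.exp x := Real.add_one_le_exp x
  have h2 : Real.exp (-x) * Real.exp x = 1 := by rw [← Real.exp_add]; simp
  have h3 : 0 < Real.exp (-x) := Real.exp_pos _
  nlinarith [sq_nonneg x, sq_nonneg (1 - x)]

lemma neg_log_one_sub_le (σ : ℝ) (h0 : 0 < σ) (h : σ ≤ 1 / 2) :
    -Real.log (1 - σ) ≤ 2 * σ := by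
  have hpos : (0:ℝ) < 1 - σ := by linarith
  have h1 : Real.exp (-(2 * σ)) ≤ 1 - σ := by
    have hE : 2 * σ + 1 ≤ Real.exp (2 * σ) := Real.add_one_le_exp _
    have h2 : Real.exp (-(2 * σ)) * Real.exp (2 * σ) = 1 := by rw [← Real.exp_add]; simp
    have h3 : 0 < Real.exp (-(2 * σ)) := Real.exp_pos _
    nlinarith
  have := (Real.le_log_iff_exp_le hpos).mpr h1
  linarith

lemma telescope_sum (f : ℕ → ℝ) (r s : ℕ) (h : r ≤ s) :
    ∑ t ∈ Finset.Icc r s, (f t - f (t + 1)) = f r - f (s + 1) := by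
  induction s, h using Nat.le_induction with
  | base => simp
  | succ n hn ih =>
    rw [Finset.sum_Icc_succ_top (le_trans hn (Nat.le_succ n)), ih]; ring

/-- Fixed-share exponential reweighting regret bound (Lemma 1 of the paper):
the expected loss of the aggregation over any interval `[r, s] ⊆ [1, T]` is bounded
by the loss of any fixed expert `i`, plus `η` times the expected squared loss, plus
`(1/η)·(log(k/σ) + 2σ|I|)`. -/
theorem fixed_share_regret_bound
    (k T : ℕ) (hk : 1 ≤ k) (hT : 1 ≤ T)
    (η σ : ℝ) (hη : 0 < η) (hσ0 : 0 < σ) (hσ : σ ≤ 1 / 2)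
    (ℓ : ℕ → Fin k → ℝ) (hℓ : ∀ t, 1 ≤ t → t ≤ T → ∀ i, 0 ≤ ℓ t i)
    (w : ℕ → Fin k → ℝ)
    (hw1 : ∀ i, w 1 i = 1)
    (hwrec : ∀ t, 1 ≤ t → t ≤ T → ∀ i,
      w (t + 1) i = (1 - σ) * w t i * Real.exp (-η * ℓ t i)
        + σ / k * ∑ j, w t j * Real.exp (-η * ℓ t j))
    (p : ℕ → Fin k → ℝ)
    (hp : ∀ t i, p t i = w t i / ∑ j, w t j)
    (r s : ℕ) (hr : 1 ≤ r) (hrs : r ≤ s) (hs : s ≤ T) (i : Fin k) :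
    ∑ t ∈ Finset.Icc r s, ∑ j, p t j * ℓ t j
      ≤ ∑ t ∈ Finset.Icc r s, ℓ t i
        + η * ∑ t ∈ Finset.Icc r s, ∑ j, p t j * (ℓ t j) ^ 2
        + (1 / η) * (Real.log ((k : ℝ) / σ) + 2 * σ * ((s : ℝ) - (r : ℝ) + 1)) := by
  haveI : Nonempty (Fin k) := Fin.pos_iff_nonempty.mp hk
  have hk0 : (0:ℝ) < k := by exact_mod_cast hk
  have hσ1 : σ < 1 := by linarith
  -- positivity of weights
  have hwpos : ∀ t, 1 ≤ t → t ≤ T + 1 → ∀ j, 0 < w t j := by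
    intro t ht1
    induction t, ht1 using Nat.le_induction with
    | base => intro _ j; rw [hw1]; norm_num
    | succ n hn ih =>
      intro hnT j
      have hnT' : n ≤ T := by omega
      have ihh : ∀ j, 0 < w n j := fun j => ih (by omega) j
      rw [hwrec n hn hnT' j]
      have t1 : 0 < (1 - σ) * w n j * Real.exp (-η * ℓ n j) :=
        mul_pos (mul_pos (by linarith) (ihh j)) (Real.exp_pos _)
      have t2 : 0 < σ / k * ∑ j, w n j * Real.exp (-η * ℓ n j) := by
        apply mul_pos (div_pos hσ0 hk0)
        exact Finset.sum_pos (fun j _ => mul_pos (ihh j) (Real.exp_pos _))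
          Finset.univ_nonempty
      linarith
  have hWpos : ∀ t, 1 ≤ t → t ≤ T + 1 → 0 < ∑ j, w t j := fun t h1 h2 =>
    Finset.sum_pos (fun j _ => hwpos t h1 h2 j) Finset.univ_nonempty
  -- total weight recursion
  have hWrec : ∀ t, 1 ≤ t → t ≤ T →
      (∑ j, w (t + 1) j) = ∑ j, w t j * Real.exp (-η * ℓ t j) := by
    intro t h1 h2
    rw [Finset.sum_congr rfl (fun j _ => hwrec t h1 h2 j), Finset.sum_add_distrib,
      Finset.sum_const, Finset.card_univ, Fintype.card_fin, nsmul_eq_mul]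
    have hfirst : ∑ x : Fin k, (1 - σ) * w t x * Real.exp (-η * ℓ t x)
        = (1 - σ) * ∑ x, w t x * Real.exp (-η * ℓ t x) := by
      rw [Finset.mul_sum]; exact Finset.sum_congr rfl fun x _ => by ring
    rw [hfirst]
    field_simp
    ring
  -- per-step bound
  have hstep : ∀ t, r ≤ t → t ≤ s →
      η * (∑ j, p t j * ℓ t j) - η ^ 2 * (∑ j, p t j * (ℓ t j) ^ 2)
        ≤ Real.log (∑ j, w t j) - Real.log (∑ j, w (t + 1) j) := by
    intro t htr hts
    have h1t : 1 ≤ t := le_trans hr htr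
    have htT : t ≤ T := le_trans hts hs
    have hWt : 0 < ∑ j, w t j := hWpos t h1t (by omega)
    have hWt1 : 0 < ∑ j, w (t + 1) j := hWpos (t + 1) (by omega) (by omega)
    set A := ∑ j, p t j * ℓ t j with hA
    set B := ∑ j, p t j * (ℓ t j) ^ 2 with hB
    have e1 : (∑ j, w t j) * A = ∑ j, w t j * ℓ t j := by
      rw [hA, Finset.mul_sum]
      refine Finset.sum_congr rfl fun j _ => ?_
      rw [hp]; field_simp
    have e2 : (∑ j, w t j) * B = ∑ j, w t j * (ℓ t j) ^ 2 := by
      rw [hB, Finset.mul_sum]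
      refine Finset.sum_congr rfl fun j _ => ?_
      rw [hp]; field_simp
    have hkey : (∑ j, w (t + 1) j) ≤ (∑ j, w t j) * (1 - η * A + η ^ 2 * B) := by
      rw [hWrec t h1t htT]
      have step1 : ∀ j : Fin k, w t j * Real.exp (-η * ℓ t j)
          ≤ w t j * (1 - η * ℓ t j + η ^ 2 * (ℓ t j) ^ 2) := by
        intro j
        apply mul_le_mul_of_nonneg_left _ (le_of_lt (hwpos t h1t (by omega) j))
        have hx : 0 ≤ η * ℓ t j := mul_nonneg (le_of_lt hη) (hℓ t h1t htT j)
        have := exp_neg_le_quad (η * ℓ t j) hx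
        calc Real.exp (-η * ℓ t j) = Real.exp (-(η * ℓ t j)) := by ring_nf
          _ ≤ 1 - η * ℓ t j + (η * ℓ t j) ^ 2 := this
          _ = 1 - η * ℓ t j + η ^ 2 * (ℓ t j) ^ 2 := by ring
      calc ∑ j, w t j * Real.exp (-η * ℓ t j)
          ≤ ∑ j, w t j * (1 - η * ℓ t j + η ^ 2 * (ℓ t j) ^ 2) :=
            Finset.sum_le_sum fun j _ => step1 j
        _ = ∑ j, (w t j - η * (w t j * ℓ t j) + η ^ 2 * (w t j * (ℓ t j) ^ 2)) := by
            refine Finset.sum_congr rfl fun j _ => ?_; ring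
        _ = (∑ j, w t j) - η * (∑ j, w t j * ℓ t j)
              + η ^ 2 * (∑ j, w t j * (ℓ t j) ^ 2) := by
            rw [Finset.sum_add_distrib, Finset.sum_sub_distrib, ← Finset.mul_sum,
              ← Finset.mul_sum]
        _ = (∑ j, w t j) * (1 - η * A + η ^ 2 * B) := by
            rw [← e1, ← e2]; ring
    have hX : 0 < 1 - η * A + η ^ 2 * B := by
      have := div_pos hWt1 hWt
      nlinarith
    have hlog1 : Real.log (∑ j, w (t + 1) j)
        ≤ Real.log (∑ j, w t j) + Real.log (1 - η * A + η ^ 2 * B) := by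
      rw [← Real.log_mul (ne_of_gt hWt) (ne_of_gt hX)]
      exact Real.log_le_log hWt1 hkey
    have hlog2 : Real.log (1 - η * A + η ^ 2 * B) ≤ -(η * A) + η ^ 2 * B := by
      have := Real.log_le_sub_one_of_pos hX
      linarith
    linarith
  -- telescoping upper bound
  have htel := telescope_sum (fun t => Real.log (∑ j, w t j)) r s hrs
  have hupper : η * (∑ t ∈ Finset.Icc r s, ∑ j, p t j * ℓ t j)
      - η ^ 2 * (∑ t ∈ Finset.Icc r s, ∑ j, p t j * (ℓ t j) ^ 2)
      ≤ Real.log (∑ j, w r j) - Real.log (∑ j, w (s + 1) j) := by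
    have hsum : ∑ t ∈ Finset.Icc r s,
        (η * (∑ j, p t j * ℓ t j) - η ^ 2 * (∑ j, p t j * (ℓ t j) ^ 2))
        ≤ ∑ t ∈ Finset.Icc r s,
          (Real.log (∑ j, w t j) - Real.log (∑ j, w (t + 1) j)) := by
      refine Finset.sum_le_sum fun t ht => ?_
      rw [Finset.mem_Icc] at ht
      exact hstep t ht.1 ht.2
    rw [htel] at hsum
    rw [Finset.mul_sum, Finset.mul_sum] at *
    rw [← Finset.sum_sub_distrib]
    exact hsum
  -- lower bound on final weight of expert i
  set L := ∑ t ∈ Finset.Icc r s, ℓ t i with hL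
  have hlow : ∀ m, r ≤ m → m ≤ T →
      (1 - σ) ^ (m + 1 - r) * Real.exp (-η * ∑ t ∈ Finset.Icc r m, ℓ t i) * w r i
        ≤ w (m + 1) i := by
    intro m hm
    induction m, hm using Nat.le_induction with
    | base =>
      intro hrT
      rw [hwrec r hr hrT i]
      rw [show r + 1 - r = 1 by omega, pow_one, Finset.Icc_self, Finset.sum_singleton]
      have h2 : 0 ≤ σ / k * ∑ j, w r j * Real.exp (-η * ℓ r j) := by
        apply mul_nonneg (le_of_lt (div_pos hσ0 hk0))
        apply Finset.sum_nonneg fun j _ =>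
          mul_nonneg (le_of_lt (hwpos r hr (by omega) j)) (le_of_lt (Real.exp_pos _))
      have he : (1 - σ) * Real.exp (-η * ℓ r i) * w r i
          = (1 - σ) * w r i * Real.exp (-η * ℓ r i) := by ring
      linarith
    | succ n hn ih =>
      intro hnT
      have hih := ih (by omega)
      rw [hwrec (n + 1) (by omega) hnT i]
      have h2 : 0 ≤ σ / k * ∑ j, w (n + 1) j * Real.exp (-η * ℓ (n + 1) j) := by
        apply mul_nonneg (le_of_lt (div_pos hσ0 hk0))
        apply Finset.sum_nonneg fun j _ =>
          mul_nonneg (le_of_lt (hwpos (n + 1) (by omega) (by omega) j))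
            (le_of_lt (Real.exp_pos _))
      rw [Finset.sum_Icc_succ_top (by omega : r ≤ n + 1)]
      have e3 : (1 - σ) ^ (n + 1 + 1 - r)
            * Real.exp (-η * ((∑ t ∈ Finset.Icc r n, ℓ t i) + ℓ (n + 1) i)) * w r i
          = ((1 - σ) ^ (n + 1 - r) * Real.exp (-η * ∑ t ∈ Finset.Icc r n, ℓ t i) * w r i)
            * ((1 - σ) * Real.exp (-η * ℓ (n + 1) i)) := by
        rw [show n + 1 + 1 - r = (n + 1 - r) + 1 by omega, pow_succ,
          show -η * ((∑ t ∈ Finset.Icc r n, ℓ t i) + ℓ (n + 1) i)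
            = -η * (∑ t ∈ Finset.Icc r n, ℓ t i) + -η * ℓ (n + 1) i by ring,
          Real.exp_add]
        ring
      rw [e3]
      have hfac : 0 ≤ (1 - σ) * Real.exp (-η * ℓ (n + 1) i) :=
        mul_nonneg (by linarith) (le_of_lt (Real.exp_pos _))
      have := mul_le_mul_of_nonneg_right hih hfac
      have he2 : w (n + 1) i * ((1 - σ) * Real.exp (-η * ℓ (n + 1) i))
          = (1 - σ) * w (n + 1) i * Real.exp (-η * ℓ (n + 1) i) := by ring
      linarith
  -- w r i ≥ (σ/k) * W r
  have hwri : σ / k * (∑ j, w r j) ≤ w r i := by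
    by_cases hr1 : r = 1
    · subst hr1
      rw [hw1 i]
      have hWs : (∑ j : Fin k, w 1 j) = k := by
        rw [Finset.sum_congr rfl (fun j _ => hw1 j), Finset.sum_const,
          Finset.card_univ, Fintype.card_fin, nsmul_eq_mul, mul_one]
      rw [hWs]
      have : σ / k * k = σ := by field_simp
      rw [this]; linarith
    · have hm1 : 1 ≤ r - 1 := by omega
      have hmr : r = (r - 1) + 1 := by omega
      have hmT : r - 1 ≤ T := by omega
      rw [hmr, hwrec (r - 1) hm1 hmT i, hWrec (r - 1) hm1 hmT]
      have t1 : 0 ≤ (1 - σ) * w (r - 1) i * Real.exp (-η * ℓ (r - 1) i) :=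
        mul_nonneg (mul_nonneg (by linarith) (le_of_lt (hwpos (r - 1) hm1 (by omega) i)))
          (le_of_lt (Real.exp_pos _))
      linarith
  -- chain to bound W (s+1) from below
  have hWr : 0 < ∑ j, w r j := hWpos r hr (by omega)
  have hWs1 : 0 < ∑ j, w (s + 1) j := hWpos (s + 1) (by omega) (by omega)
  set n := s + 1 - r with hn
  have hchain : σ / k * (∑ j, w r j) * ((1 - σ) ^ n * Real.exp (-η * L))
      ≤ ∑ j, w (s + 1) j := by
    have h1 : w (s + 1) i ≤ ∑ j, w (s + 1) j :=
      Finset.single_le_sum (fun j _ => le_of_lt (hwpos (s + 1) (by omega) (by omega) j))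
        (Finset.mem_univ i)
    have h2 := hlow s hrs hs
    have h3 : (1 - σ) ^ n * Real.exp (-η * L) * (σ / k * (∑ j, w r j))
        ≤ (1 - σ) ^ n * Real.exp (-η * L) * w r i := by
      apply mul_le_mul_of_nonneg_left hwri
      exact mul_nonneg (pow_nonneg (by linarith) _) (le_of_lt (Real.exp_pos _))
    calc σ / k * (∑ j, w r j) * ((1 - σ) ^ n * Real.exp (-η * L))
        = (1 - σ) ^ n * Real.exp (-η * L) * (σ / k * (∑ j, w r j)) := by ring
      _ ≤ (1 - σ) ^ n * Real.exp (-η * L) * w r i := h3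
      _ ≤ w (s + 1) i := h2
      _ ≤ ∑ j, w (s + 1) j := h1
  -- take logs
  have hσk : 0 < σ / k := div_pos hσ0 hk0
  have h1σ : (0:ℝ) < 1 - σ := by linarith
  have hLHSpos : 0 < σ / k * (∑ j, w r j) * ((1 - σ) ^ n * Real.exp (-η * L)) :=
    mul_pos (mul_pos hσk hWr) (mul_pos (pow_pos h1σ _) (Real.exp_pos _))
  have hloglow : Real.log (σ / k) + Real.log (∑ j, w r j)
      + (n : ℝ) * Real.log (1 - σ) + (-η * L) ≤ Real.log (∑ j, w (s + 1) j) := by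
    have := Real.log_le_log hLHSpos hchain
    rw [Real.log_mul (by positivity) (by positivity),
      Real.log_mul (by positivity) (by positivity),
      Real.log_mul (by positivity) (by positivity),
      Real.log_pow, Real.log_exp] at this
    push_cast at this ⊢
    linarith
  -- combine
  have hlogk : Real.log ((k : ℝ) / σ) = -Real.log (σ / k) := by
    rw [← Real.log_inv, inv_div]
  have hnlog := neg_log_one_sub_le σ hσ0 hσ
  have hncast : (n : ℝ) = (s : ℝ) - (r : ℝ) + 1 := by
    rw [hn]; push_cast [Nat.cast_sub (by omega : r ≤ s + 1)]; ring
  have hnlogmul : (n : ℝ) * (-Real.log (1 - σ)) ≤ (n : ℝ) * (2 * σ) :=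
    mul_le_mul_of_nonneg_left hnlog (Nat.cast_nonneg n)
  set SA := ∑ t ∈ Finset.Icc r s, ∑ j, p t j * ℓ t j with hSA
  set SB := ∑ t ∈ Finset.Icc r s, ∑ j, p t j * (ℓ t j) ^ 2 with hSB
  have hmain : η * SA ≤ η * L + η ^ 2 * SB + Real.log ((k:ℝ)/σ) + (n : ℝ) * (2 * σ) := by
    have : Real.log (∑ j, w r j) - Real.log (∑ j, w (s + 1) j)
        ≤ -Real.log (σ / k) + (n : ℝ) * (-Real.log (1 - σ)) + η * L := by linarith
    rw [hlogk]
    linarith [hupper]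
  have hfin : η * SA ≤ η * (L + η * SB
      + (1 / η) * (Real.log ((k:ℝ)/σ) + 2 * σ * ((s:ℝ) - (r:ℝ) + 1))) := by
    have hexp : η * (L + η * SB + (1 / η) * (Real.log ((k:ℝ)/σ) + 2 * σ * ((s:ℝ) - (r:ℝ) + 1)))
        = η * L + η ^ 2 * SB + Real.log ((k:ℝ)/σ) + 2 * σ * ((s:ℝ) - (r:ℝ) + 1) := by
      field_simp
      ring
    rw [hexp, ← hncast]
    have : (n:ℝ) * (2 * σ) = 2 * σ * (n:ℝ) := by ring
    linarith [hmain]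
  exact le_of_mul_le_mul_left hfin hη
end

section
/- Under the setup of the exponential-reweighting scheme with fixed η > 0 and 0 < σ ≤ 1/2 (weights w₁^i = 1, w_{t+1}^i = (1−σ)·w_t^i·exp(−η ℓ_t^i) + (σ/k)·Σ_j w_t^j·exp(−η ℓ_t^j), nonnegative losses ℓ_t^i ≥ 0), let W_t := Σ_{i=1}^k w_t^i. Then for every interval [r,s] ⊆ [1,T] and every 1 ≤ i ≤ k: W_{s+1}/W_r ≥ (1−σ)^{s−r+1} · (σ/k) · exp(−η·Σ_{t=r}^s ℓ_t^i) whenever r ≥ 2, and W_{s+1}/W_r ≥ (1−σ)^{s−r+1} · (1/k) · exp(−η·Σ_{t=r}^s ℓ_t^i) when r = 1. -/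
/-- Lower bound on the total weight in the fixed-share exponential reweighting scheme
(established in the proof of Lemma 1 of the paper):
`W (s+1) / W r ≥ (1−σ)^{s−r+1} · (σ/k) · exp(−η ∑_{t=r}^s ℓ t i)` when `r ≥ 2`, and
with `σ/k` replaced by `1/k` when `r = 1`. -/
theorem fixed_share_total_weight_lower_bound
    (k T : ℕ) (hk : 1 ≤ k) (hT : 1 ≤ T)
    (η σ : ℝ) (hη : 0 < η) (hσ0 : 0 < σ) (hσ : σ ≤ 1 / 2)
    (ℓ : ℕ → Fin k → ℝ) (hℓ : ∀ t, 1 ≤ t → t ≤ T → ∀ i, 0 ≤ ℓ t i)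
    (w : ℕ → Fin k → ℝ)
    (hw1 : ∀ i, w 1 i = 1)
    (hwrec : ∀ t, 1 ≤ t → t ≤ T → ∀ i,
      w (t + 1) i = (1 - σ) * w t i * Real.exp (-η * ℓ t i)
        + σ / k * ∑ j, w t j * Real.exp (-η * ℓ t j))
    (W : ℕ → ℝ) (hW : ∀ t, W t = ∑ i, w t i)
    (r s : ℕ) (hr : 1 ≤ r) (hrs : r ≤ s) (hs : s ≤ T) (i : Fin k) :
    (2 ≤ r →
      (1 - σ) ^ (s - r + 1) * (σ / k) * Real.exp (-η * ∑ t ∈ Finset.Icc r s, ℓ t i)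
        ≤ W (s + 1) / W r) ∧
    (r = 1 →
      (1 - σ) ^ (s - r + 1) * (1 / k) * Real.exp (-η * ∑ t ∈ Finset.Icc r s, ℓ t i)
        ≤ W (s + 1) / W r) := by
  have hk0 : (0:ℝ) < k := by exact_mod_cast hk
  have hσ1 : 0 < 1 - σ := by linarith
  -- positivity of weights
  have hpos : ∀ t, 1 ≤ t → t ≤ T + 1 → ∀ j, 0 < w t j := by
    intro t
    induction t with
    | zero => omega
    | succ n ih =>
      intro h1 h2 j
      rcases Nat.lt_or_ge 1 (n+1) with h | h
      · have hn1 : 1 ≤ n := by omega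
        have hnT : n ≤ T := by omega
        rw [hwrec n hn1 hnT]
        have hS : 0 < ∑ j, w n j * Real.exp (-η * ℓ n j) :=
          Finset.sum_pos (fun x _ => mul_pos (ih hn1 (by omega) x) (Real.exp_pos _))
            ⟨j, Finset.mem_univ j⟩
        have := ih hn1 (by omega) j
        have hexp := Real.exp_pos (-η * ℓ n j)
        positivity
      · have : n = 0 := by omega
        subst this; rw [hw1]; norm_num
  -- W (t+1) = ∑ w t j e^{-ηℓ}  for 1 ≤ t ≤ T
  have hWsucc : ∀ t, 1 ≤ t → t ≤ T →
      W (t + 1) = ∑ j, w t j * Real.exp (-η * ℓ t j) := by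
    intro t h1 h2
    rw [hW]
    have : ∀ j : Fin k, w (t+1) j = (1 - σ) * w t j * Real.exp (-η * ℓ t j)
        + σ / k * ∑ x, w t x * Real.exp (-η * ℓ t x) := hwrec t h1 h2
    simp_rw [this]
    rw [Finset.sum_add_distrib, Finset.sum_const, Finset.card_univ, Fintype.card_fin,
      nsmul_eq_mul]
    simp_rw [mul_assoc]
    rw [← Finset.mul_sum]
    have hkne : (k:ℝ) ≠ 0 := ne_of_gt hk0
    field_simp
    ring
  -- chain inequality
  have hchain : ∀ s', r ≤ s' → s' ≤ T →
      (1 - σ) ^ (s' - r + 1) * Real.exp (-η * ∑ t ∈ Finset.Icc r s', ℓ t i) * w r i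
        ≤ w (s' + 1) i := by
    intro s' hrs'
    induction s', hrs' using Nat.le_induction with
    | base =>
      intro hrT
      rw [Finset.Icc_self, Finset.sum_singleton, Nat.sub_self, pow_one,
        hwrec r hr hrT i]
      have hS : 0 ≤ σ / k * ∑ j, w r j * Real.exp (-η * ℓ r j) := by
        have : 0 < ∑ j, w r j * Real.exp (-η * ℓ r j) :=
          Finset.sum_pos (fun x _ => mul_pos (hpos r hr (by omega) x) (Real.exp_pos _))
            ⟨i, Finset.mem_univ i⟩
        positivity
      nlinarith [mul_pos (hpos r hr (by omega) i) (Real.exp_pos (-η * ℓ r i))]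
    | succ n hn ih =>
      intro hnT
      have hnT' : n ≤ T := by omega
      have ih' := ih hnT'
      have hrec := hwrec (n+1) (by omega) hnT i
      have hS : 0 ≤ σ / k * ∑ j, w (n+1) j * Real.exp (-η * ℓ (n+1) j) := by
        have : 0 < ∑ j, w (n+1) j * Real.exp (-η * ℓ (n+1) j) :=
          Finset.sum_pos (fun x _ => mul_pos (hpos (n+1) (by omega) (by omega) x) (Real.exp_pos _))
            ⟨i, Finset.mem_univ i⟩
        positivity
    -- w (n+2) i ≥ (1-σ) * w (n+1) i * exp(-η ℓ (n+1) i)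
      have h2 : (1 - σ) * w (n+1) i * Real.exp (-η * ℓ (n+1) i) ≤ w (n+1+1) i := by
        rw [hrec]; linarith
      have hsum : ∑ t ∈ Finset.Icc r (n+1), ℓ t i
          = (∑ t ∈ Finset.Icc r n, ℓ t i) + ℓ (n+1) i := by
        rw [Finset.sum_Icc_succ_top (by omega : r ≤ n + 1)]
      have hpow : n + 1 - r + 1 = (n - r + 1) + 1 := by omega
      rw [hsum, hpow, pow_succ]
      have hexp : Real.exp (-η * ((∑ t ∈ Finset.Icc r n, ℓ t i) + ℓ (n+1) i))
          = Real.exp (-η * ∑ t ∈ Finset.Icc r n, ℓ t i) * Real.exp (-η * ℓ (n+1) i) := by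
        rw [← Real.exp_add]; ring_nf
      rw [hexp]
      calc (1 - σ) ^ (n - r + 1) * (1 - σ)
            * (Real.exp (-η * ∑ t ∈ Finset.Icc r n, ℓ t i) * Real.exp (-η * ℓ (n+1) i))
            * w r i
          = (1 - σ) * ((1 - σ) ^ (n - r + 1)
              * Real.exp (-η * ∑ t ∈ Finset.Icc r n, ℓ t i) * w r i)
              * Real.exp (-η * ℓ (n+1) i) := by ring
        _ ≤ (1 - σ) * w (n+1) i * Real.exp (-η * ℓ (n+1) i) :=
            mul_le_mul_of_nonneg_right
              (mul_le_mul_of_nonneg_left (ih hnT') (le_of_lt hσ1))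
              (Real.exp_pos _).le
        _ ≤ w (n+1+1) i := h2
  have hWr : 0 < W r := by
    rw [hW]
    exact Finset.sum_pos (fun x _ => hpos r hr (by omega) x) ⟨i, Finset.mem_univ i⟩
  have hWs1 : w (s+1) i ≤ W (s+1) := by
    rw [hW]
    exact Finset.single_le_sum (fun x _ => le_of_lt (hpos (s+1) (by omega) (by omega) x))
      (Finset.mem_univ i)
  have hmain := le_trans (hchain s hrs hs) hWs1
  have hexppos := Real.exp_pos (-η * ∑ t ∈ Finset.Icc r s, ℓ t i)
  have hpowpos : (0:ℝ) < (1 - σ) ^ (s - r + 1) := pow_pos hσ1 _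
  constructor
  · intro hr2
    -- w r i ≥ σ/k * W r
    have hwr : σ / k * W r ≤ w r i := by
      have h1 : 1 ≤ r - 1 := by omega
      have h2 : r - 1 ≤ T := by omega
      have heq : r - 1 + 1 = r := by omega
      have hrec := hwrec (r-1) h1 h2 i
      rw [heq] at hrec
      have hWse := hWsucc (r-1) h1 h2
      rw [heq] at hWse
      rw [hrec, hWse]
      have : 0 ≤ (1 - σ) * w (r-1) i * Real.exp (-η * ℓ (r-1) i) := by
        have := hpos (r-1) h1 (by omega) i
        positivity
      linarith
    rw [le_div_iff₀ hWr]
    calc (1 - σ) ^ (s - r + 1) * (σ / k) * Real.exp (-η * ∑ t ∈ Finset.Icc r s, ℓ t i) * W r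
        = (1 - σ) ^ (s - r + 1) * Real.exp (-η * ∑ t ∈ Finset.Icc r s, ℓ t i) * (σ / k * W r) := by ring
      _ ≤ (1 - σ) ^ (s - r + 1) * Real.exp (-η * ∑ t ∈ Finset.Icc r s, ℓ t i) * w r i :=
          mul_le_mul_of_nonneg_left hwr (by positivity)
      _ ≤ W (s+1) := hmain
  · intro hr1
    subst hr1
    have hwr : (1:ℝ) / k * W 1 = w 1 i := by
      rw [hW]
      simp only [hw1, Finset.sum_const, Finset.card_univ, Fintype.card_fin, nsmul_eq_mul,
        mul_one]
      field_simp
    rw [le_div_iff₀ hWr]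
    calc (1 - σ) ^ (s - 1 + 1) * (1 / k) * Real.exp (-η * ∑ t ∈ Finset.Icc 1 s, ℓ t i) * W 1
        = (1 - σ) ^ (s - 1 + 1) * Real.exp (-η * ∑ t ∈ Finset.Icc 1 s, ℓ t i) * (1 / k * W 1) := by ring
      _ = (1 - σ) ^ (s - 1 + 1) * Real.exp (-η * ∑ t ∈ Finset.Icc 1 s, ℓ t i) * w 1 i := by rw [hwr]
      _ ≤ W (s+1) := hmain
end

section
/- Fix α ∈ (0,1), γ > 0, and a sequence β₁,…,β_T ∈ [0,1]. Define α₁ ∈ [0,1] and α_{t+1} := α_t + γ·(α − 1{β_t < α_t}) for t ≥ 1. Then for every interval [r,s] ⊆ [1,T] and every sequence α*_r,…,α*_s ∈ [0,1]: Σ_{t=r}^s ℓ(β_t, α_t) − Σ_{t=r}^s ℓ(β_t, α*_t) ≤ (3/(2γ))·(1+γ)²·(Σ_{t=r+1}^s |α*_t − α*_{t−1}| + 1) + (γ/2)·(s−r+1). -/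
/-- The pinball (quantile) loss at level `α`: `ℓ(β, θ) = α(β − θ) − min{0, β − θ}`. -/
noncomputable def pinball (α β θ : ℝ) : ℝ := α * (β - θ) - min 0 (β - θ)

/-- Subgradient inequality for the pinball loss. -/
lemma pinball_subgrad (α b x u : ℝ) :
    pinball α b x - pinball α b u ≤ ((if b < x then (1:ℝ) else 0) - α) * (x - u) := by
  unfold pinball
  rcases min_cases 0 (b - x) with ⟨h1, h1'⟩ | ⟨h1, h1'⟩ <;>
  rcases min_cases 0 (b - u) with ⟨h2, h2'⟩ | ⟨h2, h2'⟩ <;>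
  split_ifs with h <;> nlinarith

/-- One-step descent inequality (scaled by `2γ`). -/
lemma step_ineq (α γ b x u : ℝ) (hγ : 0 < γ) (hα : α ∈ Set.Ioo (0 : ℝ) 1) :
    2 * γ * (pinball α b x - pinball α b u) ≤
      (x - u) ^ 2 - ((x + γ * (α - if b < x then 1 else 0)) - u) ^ 2 + γ ^ 2 := by
  obtain ⟨hα0, hα1⟩ := hα
  have h := pinball_subgrad α b x u
  set g : ℝ := (if b < x then (1:ℝ) else 0) - α with hg
  have hupd : x + γ * (α - if b < x then 1 else 0) = x - γ * g := by
    rw [hg]; ring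
  rw [hupd]
  have hgb : g ^ 2 ≤ 1 := by
    rw [hg]; split_ifs <;> nlinarith
  nlinarith [mul_le_mul_of_nonneg_left h (by linarith : (0:ℝ) ≤ 2 * γ)]

/-- Comparator-shift inequality. -/
lemma shift_ineq (γ x u u' : ℝ) (hγ : 0 < γ) (hx : x ∈ Set.Icc (-γ) (1 + γ))
    (hu : u ∈ Set.Icc (0:ℝ) 1) (hu' : u' ∈ Set.Icc (0:ℝ) 1) :
    (x - u') ^ 2 - (x - u) ^ 2 ≤ 2 * (1 + γ) * |u' - u| := by
  obtain ⟨hx1, hx2⟩ := hx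
  obtain ⟨hu1, hu2⟩ := hu
  obtain ⟨hu'1, hu'2⟩ := hu'
  rcases abs_cases (u' - u) with ⟨he, _⟩ | ⟨he, _⟩ <;> rw [he] <;> nlinarith

/-- The ACI iterates stay in `[-γ, 1+γ]`. -/
lemma aci_bounded (α γ : ℝ) (hα : α ∈ Set.Ioo (0 : ℝ) 1) (hγ : 0 < γ)
    (T : ℕ) (β : ℕ → ℝ) (hβ : ∀ t, 1 ≤ t → t ≤ T → β t ∈ Set.Icc (0 : ℝ) 1)
    (a : ℕ → ℝ) (ha1 : a 1 ∈ Set.Icc (0 : ℝ) 1)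
    (harec : ∀ t, 1 ≤ t → a (t + 1) = a t + γ * (α - if β t < a t then 1 else 0)) :
    ∀ t, 1 ≤ t → t ≤ T + 1 → a t ∈ Set.Icc (-γ) (1 + γ) := by
  obtain ⟨hα0, hα1⟩ := hα
  refine Nat.le_induction ?_ ?_
  · intro _
    obtain ⟨h1, h2⟩ := ha1
    exact ⟨by linarith, by linarith⟩
  · intro n hn ih hnT
    have hnT' : n ≤ T := by omega
    obtain ⟨ha1', ha2'⟩ := ih (by omega)
    obtain ⟨hb1, hb2⟩ := hβ n hn hnT'
    rw [harec n hn]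
    split_ifs with h
    · exact ⟨by nlinarith, by nlinarith⟩
    · push_neg at h
      exact ⟨by nlinarith, by nlinarith⟩

/-- Main induction: scaled dynamic regret bound with telescoped squared distances. -/
lemma main_ind (α γ : ℝ) (hα : α ∈ Set.Ioo (0 : ℝ) 1) (hγ : 0 < γ)
    (T : ℕ)
    (β : ℕ → ℝ) (hβ : ∀ t, 1 ≤ t → t ≤ T → β t ∈ Set.Icc (0 : ℝ) 1)
    (a : ℕ → ℝ) (ha1 : a 1 ∈ Set.Icc (0 : ℝ) 1)
    (harec : ∀ t, 1 ≤ t → a (t + 1) = a t + γ * (α - if β t < a t then 1 else 0))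
    (r : ℕ) (hr : 1 ≤ r) :
    ∀ s, r ≤ s → s ≤ T → ∀ astar : ℕ → ℝ,
      (∀ t, r ≤ t → t ≤ s → astar t ∈ Set.Icc (0:ℝ) 1) →
      2 * γ * ∑ t ∈ Finset.Icc r s, (pinball α (β t) (a t) - pinball α (β t) (astar t))
        ≤ (a r - astar r) ^ 2 - (a (s + 1) - astar s) ^ 2
          + 2 * (1 + γ) * ∑ t ∈ Finset.Icc (r + 1) s, |astar t - astar (t - 1)|
          + γ ^ 2 * ((s : ℝ) - (r : ℝ) + 1) := by
  refine Nat.le_induction ?_ ?_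
  · intro hrT astar hstar
    rw [Finset.Icc_self, Finset.sum_singleton]
    rw [Finset.Icc_eq_empty (by omega), Finset.sum_empty]
    have := step_ineq α γ (β r) (a r) (astar r) hγ hα
    rw [← harec r hr] at this
    nlinarith [this]
  · intro n hn ih hnT astar hstar
    have hnT' : n ≤ T := by omega
    have ihn := ih hnT' astar (fun t ht ht' => hstar t ht (by omega))
    rw [Finset.sum_Icc_succ_top (by omega : r ≤ n + 1)]
    rw [Finset.sum_Icc_succ_top (by omega : r + 1 ≤ n + 1)]
    -- step inequality at time n+1
    have hstep := step_ineq α γ (β (n + 1)) (a (n + 1)) (astar (n + 1)) hγ hα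
    rw [← harec (n + 1) (by omega)] at hstep
    -- shift inequality
    have hbound := aci_bounded α γ hα hγ T β hβ a ha1 harec (n + 1) (by omega) (by omega)
    have hshift := shift_ineq γ (a (n + 1)) (astar n) (astar (n + 1)) hγ hbound
      (hstar n hn (by omega)) (hstar (n + 1) (by omega) le_rfl)
    have hsimp : ((n:ℕ) + 1 : ℕ) - 1 = n := by omega
    rw [hsimp]
    push_cast
    nlinarith [hstep, hshift, ihn]

/-- Dynamic regret bound for online gradient descent on the pinball loss
(the ACI update), Lemma 2 of the paper. -/
theorem aci_dynamic_regret_bound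
    (α γ : ℝ) (hα : α ∈ Set.Ioo (0 : ℝ) 1) (hγ : 0 < γ)
    (T : ℕ) (hT : 1 ≤ T)
    (β : ℕ → ℝ) (hβ : ∀ t, 1 ≤ t → t ≤ T → β t ∈ Set.Icc (0 : ℝ) 1)
    (a : ℕ → ℝ) (ha1 : a 1 ∈ Set.Icc (0 : ℝ) 1)
    (harec : ∀ t, 1 ≤ t →
      a (t + 1) = a t + γ * (α - if β t < a t then 1 else 0))
    (r s : ℕ) (hr : 1 ≤ r) (hrs : r ≤ s) (hs : s ≤ T)
    (astar : ℕ → ℝ) (hastar : ∀ t, r ≤ t → t ≤ s → astar t ∈ Set.Icc (0 : ℝ) 1) :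
    ∑ t ∈ Finset.Icc r s, pinball α (β t) (a t)
      - ∑ t ∈ Finset.Icc r s, pinball α (β t) (astar t)
    ≤ (3 / (2 * γ)) * (1 + γ) ^ 2
        * ((∑ t ∈ Finset.Icc (r + 1) s, |astar t - astar (t - 1)|) + 1)
      + (γ / 2) * ((s : ℝ) - (r : ℝ) + 1) := by
  have key := main_ind α γ hα hγ T β hβ a ha1 harec r hr s hrs hs astar hastar
  rw [← Finset.sum_sub_distrib]
  set L := ∑ t ∈ Finset.Icc r s, (pinball α (β t) (a t) - pinball α (β t) (astar t)) with hL
  set P := ∑ t ∈ Finset.Icc (r + 1) s, |astar t - astar (t - 1)| with hP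
  have hPpos : 0 ≤ P := Finset.sum_nonneg fun t _ => abs_nonneg _
  -- bound (a r - astar r)^2 ≤ (1+γ)^2
  obtain ⟨har1, har2⟩ := aci_bounded α γ hα hγ T β hβ a ha1 harec r hr (by omega)
  obtain ⟨hu1, hu2⟩ := hastar r le_rfl hrs
  have hsq : (a r - astar r) ^ 2 ≤ (1 + γ) ^ 2 := by nlinarith
  have hsq2 : 0 ≤ (a (s + 1) - astar s) ^ 2 := sq_nonneg _
  have h2γ : (0:ℝ) < 2 * γ := by linarith
  rw [← mul_le_mul_iff_right₀ h2γ]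
  have heq : 2 * γ * ((3 / (2 * γ)) * (1 + γ) ^ 2 * (P + 1) + (γ / 2) * ((s : ℝ) - (r : ℝ) + 1))
      = 3 * (1 + γ) ^ 2 * (P + 1) + γ ^ 2 * ((s : ℝ) - (r : ℝ) + 1) := by
    field_simp
  rw [heq]
  nlinarith [key, hPpos, hsq, hsq2]
end

section
/- Fix α ∈ (0,1). Let β be a real-valued random variable supported on [0,1] with a density q(·) on [0,1] satisfying q(x) ≥ p > 0 for all x ∈ [0,1], and let α* ∈ [0,1] satisfy ℙ(β < α*) = α. Then for every τ ∈ [0,1]: E[ℓ(β,τ)] − E[ℓ(β,α*)] ≥ p·(τ − α*)²/2. -/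
open MeasureTheory
open scoped ENNReal NNReal

/-- Quadratic lower bound on the excess pinball loss (Proposition 4 of the paper):
if `β` has a density `q ≥ p > 0` on `[0,1]` and `ℙ(β < α*) = α`, then for every
`τ ∈ [0,1]`, `E[ℓ(β,τ)] − E[ℓ(β,α*)] ≥ p(τ − α*)²/2`. -/
theorem pinball_excess_loss_quadratic_lower_bound
    {Ω : Type*} [MeasurableSpace Ω] (μ : Measure Ω) [IsProbabilityMeasure μ]
    (α : ℝ) (hα : α ∈ Set.Ioo (0 : ℝ) 1)
    (β : Ω → ℝ) (hβmeas : Measurable β)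
    (q : ℝ → ℝ) (hqmeas : Measurable q)
    (hlaw : Measure.map β μ
      = (volume.restrict (Set.Icc (0 : ℝ) 1)).withDensity
          (fun x => ENNReal.ofReal (q x)))
    (p : ℝ) (hp : 0 < p) (hq : ∀ x ∈ Set.Icc (0 : ℝ) 1, p ≤ q x)
    (αstar : ℝ) (hαstarmem : αstar ∈ Set.Icc (0 : ℝ) 1)
    (hαstar : (μ {ω | β ω < αstar}).toReal = α)
    (τ : ℝ) (hτ : τ ∈ Set.Icc (0 : ℝ) 1) :
    p * (τ - αstar) ^ 2 / 2
      ≤ (∫ ω, pinball α (β ω) τ ∂μ) - (∫ ω, pinball α (β ω) αstar ∂μ) := by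
  obtain ⟨ha0, ha1⟩ := hαstarmem
  obtain ⟨ht0, ht1⟩ := hτ
  set ν := volume.restrict (Set.Icc (0 : ℝ) 1) with hν
  haveI : IsProbabilityMeasure (Measure.map β μ) :=
    Measure.isProbabilityMeasure_map hβmeas.aemeasurable
  -- a.e. lower bound for q on ν
  have hq_ae : ∀ᵐ x ∂ν, p ≤ q x :=
    (ae_restrict_iff' measurableSet_Icc).2 (Filter.Eventually.of_forall hq)
  have hq_nonneg_ae : ∀ᵐ x ∂ν, 0 ≤ q x := hq_ae.mono fun x hx => hp.le.trans hx
  -- total mass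
  have hmass_lint : ∫⁻ x, ENNReal.ofReal (q x) ∂ν = 1 := by
    have h1 : (Measure.map β μ) Set.univ = 1 := measure_univ
    rw [hlaw, withDensity_apply _ MeasurableSet.univ, Measure.restrict_univ] at h1
    exact h1
  have hqint : IntegrableOn q (Set.Icc (0 : ℝ) 1) := by
    refine ⟨hqmeas.aestronglyMeasurable, ?_⟩
    rw [hasFiniteIntegral_iff_ofReal hq_nonneg_ae, hmass_lint]
    exact ENNReal.one_lt_top
  have hmass : ∫ x in Set.Icc (0 : ℝ) 1, q x = 1 := by
    rw [integral_eq_lintegral_of_nonneg_ae hq_nonneg_ae hqmeas.aestronglyMeasurable.restrict,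
      hmass_lint]
    simp
  -- cdf identity
  have hcdf : ∫ x in Set.Ico (0 : ℝ) αstar, q x = α := by
    have hset : Set.Iio αstar ∩ Set.Icc (0 : ℝ) 1 = Set.Ico 0 αstar := by
      ext x
      simp only [Set.mem_inter_iff, Set.mem_Iio, Set.mem_Icc, Set.mem_Ico]
      constructor
      · rintro ⟨h1, h2, _⟩; exact ⟨h2, h1⟩
      · rintro ⟨h1, h2⟩; exact ⟨h2, h1, le_trans h2.le ha1⟩
    have hmap : μ {ω | β ω < αstar} = ∫⁻ x in Set.Ico (0 : ℝ) αstar, ENNReal.ofReal (q x) := by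
      have : {ω | β ω < αstar} = β ⁻¹' Set.Iio αstar := rfl
      rw [this, ← Measure.map_apply hβmeas measurableSet_Iio, hlaw,
        withDensity_apply _ measurableSet_Iio, hν, Measure.restrict_restrict measurableSet_Iio,
        hset]
    have hnn : ∀ᵐ x ∂(volume.restrict (Set.Ico (0 : ℝ) αstar)), 0 ≤ q x :=
      (ae_restrict_iff' measurableSet_Ico).2 (Filter.Eventually.of_forall fun x hx =>
        hp.le.trans (hq x ⟨hx.1, le_trans hx.2.le ha1⟩))
    rw [integral_eq_lintegral_of_nonneg_ae hnn hqmeas.aestronglyMeasurable.restrict, ← hmap,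
      hαstar]
  -- expectation as a density integral
  have hcont : ∀ θ : ℝ, Continuous fun x => pinball α x θ := by
    intro θ
    unfold pinball
    exact (continuous_const.mul (continuous_id.sub continuous_const)).sub
      (continuous_const.min (continuous_id.sub continuous_const))
  have key : ∀ θ : ℝ, (∫ ω, pinball α (β ω) θ ∂μ)
      = ∫ x in Set.Icc (0 : ℝ) 1, q x * pinball α x θ := by
    intro θ
    rw [← integral_map hβmeas.aemeasurable ((hcont θ).aestronglyMeasurable), hlaw]
    have hd : (fun x => ENNReal.ofReal (q x)) = fun x => ((q x).toNNReal : ℝ≥0∞) := rfl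
    rw [hd, integral_withDensity_eq_integral_smul hqmeas.real_toNNReal]
    refine integral_congr_ae (hq_nonneg_ae.mono fun x hx => ?_)
    simp [NNReal.smul_def, Real.coe_toNNReal _ hx]
  -- integrability of q * pinball-type products
  have hbound : ∀ θ ∈ Set.Icc (0 : ℝ) 1, ∀ x ∈ Set.Icc (0 : ℝ) 1,
      ‖pinball α x θ‖ ≤ 2 := by
    rintro θ ⟨hθ0, hθ1⟩ x ⟨hx0, hx1⟩
    have h1 : |x - θ| ≤ 1 := abs_le.2 ⟨by linarith, by linarith⟩
    have h2 : |min 0 (x - θ)| ≤ 1 := by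
      rcases le_total (x - θ) 0 with h | h
      · rw [min_eq_right h]; exact h1
      · rw [min_eq_left h]; simp
    calc ‖pinball α x θ‖ ≤ |α * (x - θ)| + |min 0 (x - θ)| := abs_sub _ _
      _ ≤ |α| * 1 + 1 := by
          rw [abs_mul]
          gcongr
      _ ≤ 2 := by rw [abs_of_pos hα.1]; linarith [hα.2]
  have hbint : ∀ θ ∈ Set.Icc (0 : ℝ) 1,
      IntegrableOn (fun x => q x * pinball α x θ) (Set.Icc (0 : ℝ) 1) := by
    intro θ hθ
    have := Integrable.bdd_mul (c := 2) hqint ((hcont θ).aestronglyMeasurable.restrict)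
      ((ae_restrict_iff' measurableSet_Icc).2 (Filter.Eventually.of_forall (hbound θ hθ)))
    exact this.congr (Filter.Eventually.of_forall fun x => mul_comm _ _)
  -- the difference
  set m : ℝ → ℝ := fun x => min 0 (x - αstar) - min 0 (x - τ) with hm
  have hmbound : ∀ x ∈ Set.Icc (0 : ℝ) 1, ‖m x‖ ≤ 2 := by
    rintro x ⟨hx0, hx1⟩
    have h1 : |min 0 (x - αstar)| ≤ 1 := by
      rcases le_total (x - αstar) 0 with h | h
      · rw [min_eq_right h]; exact abs_le.2 ⟨by linarith, by linarith⟩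
      · rw [min_eq_left h]; simp
    have h2 : |min 0 (x - τ)| ≤ 1 := by
      rcases le_total (x - τ) 0 with h | h
      · rw [min_eq_right h]; exact abs_le.2 ⟨by linarith, by linarith⟩
      · rw [min_eq_left h]; simp
    calc ‖m x‖ ≤ |min 0 (x - αstar)| + |min 0 (x - τ)| := abs_sub _ _
      _ ≤ 2 := by linarith
  have hmcont : Continuous m :=
    (continuous_const.min (continuous_id.sub continuous_const)).sub
      (continuous_const.min (continuous_id.sub continuous_const))
  have hmint : IntegrableOn (fun x => q x * m x) (Set.Icc (0 : ℝ) 1) := by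
    have := Integrable.bdd_mul (c := 2) hqint (hmcont.aestronglyMeasurable.restrict)
      ((ae_restrict_iff' measurableSet_Icc).2 (Filter.Eventually.of_forall hmbound))
    exact this.congr (Filter.Eventually.of_forall fun x => mul_comm _ _)
  have hdiff : (∫ ω, pinball α (β ω) τ ∂μ) - (∫ ω, pinball α (β ω) αstar ∂μ)
      = α * (αstar - τ) + ∫ x in Set.Icc (0 : ℝ) 1, q x * m x := by
    rw [key τ, key αstar, ← integral_sub (hbint τ ⟨ht0, ht1⟩) (hbint αstar ⟨ha0, ha1⟩)]
    have hsplit : ∀ x : ℝ, q x * pinball α x τ - q x * pinball α x αstar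
        = q x * (α * (αstar - τ)) + q x * m x := by
      intro x
      unfold pinball
      simp only [hm]
      ring
    rw [integral_congr_ae (Filter.Eventually.of_forall fun x => hsplit x),
      integral_add (hqint.mul_const _) hmint, integral_mul_const, hmass]
    ring_nf
  rw [hdiff]
  -- now the main estimate, by cases on the order of αstar, τ
  rcases le_total αstar τ with hord | hord
  · -- τ ≥ αstar
    have hsets : Set.Icc (0 : ℝ) 1
        = (Set.Ico 0 αstar ∪ Set.Ico αstar τ) ∪ Set.Icc τ 1 := by
      rw [Set.Ico_union_Ico_eq_Ico ha0 hord, Set.Ico_union_Icc_eq_Icc ht0 ht1]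
    have hi1 : IntegrableOn (fun x => q x * m x) (Set.Ico 0 αstar) :=
      hmint.mono_set (fun x hx => ⟨hx.1, le_trans hx.2.le ha1⟩)
    have hi2 : IntegrableOn (fun x => q x * m x) (Set.Ico αstar τ) :=
      hmint.mono_set (fun x hx => ⟨le_trans ha0 hx.1, le_trans hx.2.le ht1⟩)
    have hi3 : IntegrableOn (fun x => q x * m x) (Set.Icc τ 1) :=
      hmint.mono_set (fun x hx => ⟨le_trans ht0 hx.1, hx.2⟩)
    have hunion : ∫ x in Set.Icc (0 : ℝ) 1, q x * m x
        = (∫ x in Set.Ico (0 : ℝ) αstar, q x * m x)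
          + (∫ x in Set.Ico αstar τ, q x * m x)
          + ∫ x in Set.Icc τ 1, q x * m x := by
      rw [hsets, setIntegral_union ?_ measurableSet_Icc (hi1.union hi2) hi3,
        setIntegral_union ?_ measurableSet_Ico hi1 hi2]
      · rintro s hs1 hs2 x hx
        have h1 := hs1 hx
        have h2 := hs2 hx
        exact absurd h2.1 (not_le.2 h1.2)
      · rintro s hs1 hs2 x hx
        rcases hs1 hx with h | h
        · exact absurd (hs2 hx).1 (not_le.2 (lt_of_lt_of_le h.2 hord))
        · exact absurd (hs2 hx).1 (not_le.2 h.2)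
    have hA : ∫ x in Set.Ico (0 : ℝ) αstar, q x * m x = (τ - αstar) * α := by
      rw [setIntegral_congr_fun measurableSet_Ico
        (g := fun x => q x * (τ - αstar)) ?_, integral_mul_const, hcdf]
      · ring
      · intro x hx
        simp only [hm]
        rw [min_eq_right (by linarith [hx.2] : x - αstar ≤ 0),
          min_eq_right (by linarith [hx.2, hord] : x - τ ≤ 0)]
        ring
    have hC : ∫ x in Set.Icc τ 1, q x * m x = 0 := by
      rw [setIntegral_congr_fun measurableSet_Icc (g := fun _ => (0 : ℝ)) ?_, integral_zero]
      intro x hx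
      simp only [hm]
      rw [min_eq_left (by linarith [hx.1, hord] : (0:ℝ) ≤ x - αstar),
        min_eq_left (by linarith [hx.1] : (0:ℝ) ≤ x - τ)]
      ring
    have hB : p * (τ - αstar) ^ 2 / 2 ≤ ∫ x in Set.Ico αstar τ, q x * m x := by
      have heq : ∫ x in Set.Ico αstar τ, q x * m x
          = ∫ x in Set.Ico αstar τ, q x * (τ - x) := by
        refine setIntegral_congr_fun measurableSet_Ico fun x hx => ?_
        simp only [hm]
        rw [min_eq_left (by linarith [hx.1] : (0:ℝ) ≤ x - αstar),
          min_eq_right (by linarith [hx.2] : x - τ ≤ 0)]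
        ring
      have hpint : IntegrableOn (fun x => p * (τ - x)) (Set.Ico αstar τ) :=
        ((continuous_const.mul (continuous_const.sub continuous_id)).integrableOn_Icc).mono_set
          Set.Ico_subset_Icc_self
      have hqxint : IntegrableOn (fun x => q x * (τ - x)) (Set.Ico αstar τ) :=
        (hi2.congr_fun (fun x hx => by
          simp only [hm]
          rw [min_eq_left (by linarith [hx.1] : (0:ℝ) ≤ x - αstar),
            min_eq_right (by linarith [hx.2] : x - τ ≤ 0)]
          ring) measurableSet_Ico)
      have hmono : ∫ x in Set.Ico αstar τ, p * (τ - x)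
          ≤ ∫ x in Set.Ico αstar τ, q x * (τ - x) := by
        refine setIntegral_mono_on hpint hqxint measurableSet_Ico fun x hx => ?_
        have hxmem : x ∈ Set.Icc (0 : ℝ) 1 := ⟨le_trans ha0 hx.1, le_trans hx.2.le ht1⟩
        exact mul_le_mul_of_nonneg_right (hq x hxmem) (by linarith [hx.2])
      have hval : ∫ x in Set.Ico αstar τ, p * (τ - x) = p * (τ - αstar) ^ 2 / 2 := by
        rw [integral_Ico_eq_integral_Ioo, ← integral_Ioc_eq_integral_Ioo,
          ← intervalIntegral.integral_of_le hord]
        have : ∫ x in αstar..τ, p * (τ - x)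
            = ∫ x in αstar..τ, (p * τ - p * x) := by
          congr 1; ext x; ring
        rw [this, intervalIntegral.integral_sub intervalIntegrable_const
          (intervalIntegral.intervalIntegrable_id.const_mul p),
          intervalIntegral.integral_const, intervalIntegral.integral_const_mul, integral_id]
        simp only [smul_eq_mul]
        ring
      rw [heq]
      linarith
    rw [hunion, hA, hC]
    have : α * (αstar - τ) + ((τ - αstar) * α
        + (∫ x in Set.Ico αstar τ, q x * m x) + 0)
        = ∫ x in Set.Ico αstar τ, q x * m x := by ring
    rw [this]
    exact hB
  · -- τ ≤ αstar
    have hsets : Set.Icc (0 : ℝ) 1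
        = (Set.Ico 0 τ ∪ Set.Ico τ αstar) ∪ Set.Icc αstar 1 := by
      rw [Set.Ico_union_Ico_eq_Ico ht0 hord, Set.Ico_union_Icc_eq_Icc ha0 ha1]
    have hi1 : IntegrableOn (fun x => q x * m x) (Set.Ico 0 τ) :=
      hmint.mono_set (fun x hx => ⟨hx.1, le_trans hx.2.le ht1⟩)
    have hi2 : IntegrableOn (fun x => q x * m x) (Set.Ico τ αstar) :=
      hmint.mono_set (fun x hx => ⟨le_trans ht0 hx.1, le_trans hx.2.le ha1⟩)
    have hi3 : IntegrableOn (fun x => q x * m x) (Set.Icc αstar 1) :=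
      hmint.mono_set (fun x hx => ⟨le_trans ha0 hx.1, hx.2⟩)
    have hunion : ∫ x in Set.Icc (0 : ℝ) 1, q x * m x
        = (∫ x in Set.Ico (0 : ℝ) τ, q x * m x)
          + (∫ x in Set.Ico τ αstar, q x * m x)
          + ∫ x in Set.Icc αstar 1, q x * m x := by
      rw [hsets, setIntegral_union ?_ measurableSet_Icc (hi1.union hi2) hi3,
        setIntegral_union ?_ measurableSet_Ico hi1 hi2]
      · rintro s hs1 hs2 x hx
        have h1 := hs1 hx
        have h2 := hs2 hx
        exact absurd h2.1 (not_le.2 h1.2)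
      · rintro s hs1 hs2 x hx
        rcases hs1 hx with h | h
        · exact absurd (hs2 hx).1 (not_le.2 (lt_of_lt_of_le h.2 hord))
        · exact absurd (hs2 hx).1 (not_le.2 h.2)
    -- cdf splits
    have hq1int : IntegrableOn q (Set.Ico (0:ℝ) τ) :=
      hqint.mono_set (fun x hx => ⟨hx.1, le_trans hx.2.le ht1⟩)
    have hq2int : IntegrableOn q (Set.Ico τ αstar) :=
      hqint.mono_set (fun x hx => ⟨le_trans ht0 hx.1, le_trans hx.2.le ha1⟩)
    have hcdfsplit : (∫ x in Set.Ico (0:ℝ) τ, q x) + (∫ x in Set.Ico τ αstar, q x) = α := by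
      rw [← setIntegral_union ?_ measurableSet_Ico hq1int hq2int,
        Set.Ico_union_Ico_eq_Ico ht0 hord, hcdf]
      rintro s hs1 hs2 x hx
      exact absurd (hs2 hx).1 (not_le.2 (hs1 hx).2)
    have hA : ∫ x in Set.Ico (0:ℝ) τ, q x * m x
        = (τ - αstar) * ∫ x in Set.Ico (0:ℝ) τ, q x := by
      rw [setIntegral_congr_fun measurableSet_Ico
        (g := fun x => q x * (τ - αstar)) ?_, integral_mul_const]
      · ring
      · intro x hx
        simp only [hm]
        rw [min_eq_right (by linarith [hx.2, hord] : x - αstar ≤ 0),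
          min_eq_right (by linarith [hx.2] : x - τ ≤ 0)]
        ring
    have hC : ∫ x in Set.Icc αstar 1, q x * m x = 0 := by
      rw [setIntegral_congr_fun measurableSet_Icc (g := fun _ => (0 : ℝ)) ?_, integral_zero]
      intro x hx
      simp only [hm]
      rw [min_eq_left (by linarith [hx.1] : (0:ℝ) ≤ x - αstar),
        min_eq_left (by linarith [hx.1, hord] : (0:ℝ) ≤ x - τ)]
      ring
    have hBeq : ∫ x in Set.Ico τ αstar, q x * m x
        = ∫ x in Set.Ico τ αstar, q x * (x - αstar) := by
      refine setIntegral_congr_fun measurableSet_Ico fun x hx => ?_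
      simp only [hm]
      rw [min_eq_right (by linarith [hx.2] : x - αstar ≤ 0),
        min_eq_left (by linarith [hx.1] : (0:ℝ) ≤ x - τ)]
      ring
    -- combine: goal reduces to ∫_{Ico τ αstar} q (x - τ) ≥ p (αstar - τ)²/2
    have hq2int' : IntegrableOn (fun x => q x * (x - αstar)) (Set.Ico τ αstar) :=
      hi2.congr_fun (fun x hx => by
        simp only [hm]
        rw [min_eq_right (by linarith [hx.2] : x - αstar ≤ 0),
          min_eq_left (by linarith [hx.1] : (0:ℝ) ≤ x - τ)]
        ring) measurableSet_Ico
    have hcomb : ∫ x in Set.Ico τ αstar, (q x * (x - αstar) + (αstar - τ) * q x)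
        = (∫ x in Set.Ico τ αstar, q x * (x - αstar))
          + (αstar - τ) * ∫ x in Set.Ico τ αstar, q x := by
      rw [integral_add hq2int' (hq2int.const_mul _), integral_const_mul]
    have hB : p * (τ - αstar) ^ 2 / 2
        ≤ ∫ x in Set.Ico τ αstar, (q x * (x - αstar) + (αstar - τ) * q x) := by
      have heq2 : ∀ x ∈ Set.Ico τ αstar,
          q x * (x - αstar) + (αstar - τ) * q x = q x * (x - τ) := fun x _ => by ring
      rw [setIntegral_congr_fun measurableSet_Ico heq2]
      have hpint : IntegrableOn (fun x => p * (x - τ)) (Set.Ico τ αstar) :=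
        ((continuous_const.mul (continuous_id.sub continuous_const)).integrableOn_Icc).mono_set
          Set.Ico_subset_Icc_self
      have hqxint : IntegrableOn (fun x => q x * (x - τ)) (Set.Ico τ αstar) := by
        have hb : ∀ᵐ x ∂(volume.restrict (Set.Ico τ αstar)), ‖x - τ‖ ≤ 1 :=
          (ae_restrict_iff' measurableSet_Ico).2 (Filter.Eventually.of_forall fun x hx => by
            rw [Real.norm_eq_abs]
            exact abs_le.2 ⟨by linarith [hx.1], by linarith [hx.2.le]⟩)
        have := Integrable.bdd_mul (c := 1) hq2int
          ((continuous_id.sub continuous_const).aestronglyMeasurable.restrict) hb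
        exact this.congr (Filter.Eventually.of_forall fun x => mul_comm _ _)
      have hmono : ∫ x in Set.Ico τ αstar, p * (x - τ)
          ≤ ∫ x in Set.Ico τ αstar, q x * (x - τ) := by
        refine setIntegral_mono_on hpint hqxint measurableSet_Ico fun x hx => ?_
        have hxmem : x ∈ Set.Icc (0 : ℝ) 1 := ⟨le_trans ht0 hx.1, le_trans hx.2.le ha1⟩
        exact mul_le_mul_of_nonneg_right (hq x hxmem) (by linarith [hx.1])
      have hval : ∫ x in Set.Ico τ αstar, p * (x - τ) = p * (τ - αstar) ^ 2 / 2 := by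
        rw [integral_Ico_eq_integral_Ioo, ← integral_Ioc_eq_integral_Ioo,
          ← intervalIntegral.integral_of_le hord]
        have : ∫ x in τ..αstar, p * (x - τ)
            = ∫ x in τ..αstar, (p * x - p * τ) := by
          congr 1; ext x; ring
        rw [this, intervalIntegral.integral_sub
          (intervalIntegral.intervalIntegrable_id.const_mul p)
          intervalIntegrable_const,
          intervalIntegral.integral_const, intervalIntegral.integral_const_mul, integral_id]
        simp only [smul_eq_mul]
        ring
      linarith
    rw [hunion, hA, hC, hBeq]
    have hfin : α * (αstar - τ)
        + ((τ - αstar) * (∫ x in Set.Ico (0:ℝ) τ, q x)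
          + (∫ x in Set.Ico τ αstar, q x * (x - αstar)) + 0)
        = (∫ x in Set.Ico τ αstar, q x * (x - αstar))
          + (αstar - τ) * ∫ x in Set.Ico τ αstar, q x := by
      have h1 : (∫ x in Set.Ico (0:ℝ) τ, q x) = α - ∫ x in Set.Ico τ αstar, q x := by
        linarith [hcdfsplit]
      rw [h1]; ring
    rw [hfin, ← hcomb]
    exact hB
end

section
/- Fix α ∈ [0,1], integers k ≥ 1, T ≥ 1, step sizes γ₁,…,γ_k > 0 with γ_min := min_i γ_i and γ_max := max_i γ_i, a sequence β₁,…,β_T ∈ [0,1], and sequences η_t > 0 and σ_t ∈ [0,1]. For each expert i, define α₁^i ∈ [0,1], err_t^i := 1{β_t < α_t^i}, and α_{t+1}^i := α_t^i + γ_i·(α − err_t^i); set ℓ_t^i := ℓ(β_t, α_t^i) and define weights w₁^i = 1, w_{t+1}^i = (1−σ_t)·w_t^i·exp(−η_t ℓ_t^i) + (σ_t/k)·Σ_j w_t^j·exp(−η_t ℓ_t^j), and probabilities p_t^i := w_t^i/Σ_j w_t^j. Then | (1/T)·Σ_{t=1}^T Σ_i p_t^i err_t^i − α | ≤ (1+2γ_max)/(T·γ_min)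 + ((1+2γ_max)²/γ_min)·(1/T)·Σ_{t=1}^T η_t·exp(η_t·(1+2γ_max)) + 2·((1+γ_max)/γ_min)·(1/T)·Σ_{t=1}^T σ_t. -/
lemma exp_neg_lip {x y : ℝ} (hx : 0 ≤ x) (hy : 0 ≤ y) :
    |Real.exp (-x) - Real.exp (-y)| ≤ |x - y| := by
  have key : ∀ u v : ℝ, 0 ≤ u → u ≤ v → Real.exp (-u) - Real.exp (-v) ≤ v - u := by
    intro u v hu huv
    have h1 : Real.exp (-v) = Real.exp (-u) * Real.exp (u - v) := by
      rw [← Real.exp_add]; ring_nf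
    have h2 := Real.add_one_le_exp (u - v)
    have h3 : Real.exp (-u) ≤ 1 := Real.exp_le_one_iff.mpr (by linarith)
    have h4 := Real.exp_pos (-u)
    nlinarith
  rcases le_total x y with h | h
  · rw [abs_of_nonneg (by nlinarith [Real.exp_le_exp.mpr (neg_le_neg h)]),
      abs_of_nonpos (by linarith)]
    have := key x y hx h; linarith
  · rw [abs_of_nonpos (by nlinarith [Real.exp_le_exp.mpr (neg_le_neg h)]),
      abs_of_nonneg (by linarith)]
    have := key y x hy h; linarith

lemma pinball_bounds {α b θ C : ℝ} (hα : 0 ≤ α) (hα1 : α ≤ 1)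
    (hb0 : 0 ≤ b) (hb1 : b ≤ 1) (hθl : -C ≤ θ) (hθu : θ ≤ 1 + C) :
    0 ≤ pinball α b θ ∧ pinball α b θ ≤ 1 + C := by
  unfold pinball
  rcases le_total (b - θ) 0 with h | h
  · rw [min_eq_right h]; constructor <;> nlinarith
  · rw [min_eq_left h]; constructor <;> nlinarith

lemma abel_sum (q d : ℕ → ℝ) :
    ∀ T : ℕ, 1 ≤ T →
    ∑ t ∈ Finset.Icc 1 T, q t * d t
      = q T * (∑ s ∈ Finset.Icc 1 T, d s)
        - ∑ t ∈ Finset.Icc 1 (T - 1), (q (t + 1) - q t) * (∑ s ∈ Finset.Icc 1 t, d s) := by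
  intro T
  induction T with
  | zero => omega
  | succ n ih =>
    intro _
    rcases Nat.eq_zero_or_pos n with hn | hn
    · subst hn; simp
    · obtain ⟨m, rfl⟩ : ∃ m, n = m + 1 := ⟨n - 1, by omega⟩
      have h1 : (1:ℕ) ≤ m + 1 := by omega
      have h2 : (1:ℕ) ≤ m + 1 + 1 := by omega
      rw [Nat.add_sub_cancel, Finset.sum_Icc_succ_top h1, Finset.sum_Icc_succ_top h2,
        Finset.sum_Icc_succ_top h2, ih h1, Nat.add_sub_cancel]
      ring

set_option maxHeartbeats 2000000

/-- Long-term coverage bound for FACI with time-varying parameters (Theorem 6 of the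
paper): the deviation of the average expected miscoverage from `α` is bounded in terms
of the averages of `η_t·exp(η_t(1+2γ_max))` and of `σ_t`. -/
theorem faci_long_term_coverage
    (α : ℝ) (hα : α ∈ Set.Icc (0 : ℝ) 1)
    (k T : ℕ) (hk : 0 < k) (hT : 1 ≤ T)
    (γ : Fin k → ℝ) (hγ : ∀ i, 0 < γ i)
    (γmin γmax : ℝ)
    (hγmin : γmin = Finset.univ.inf' ⟨⟨0, hk⟩, Finset.mem_univ _⟩ γ)
    (hγmax : γmax = Finset.univ.sup' ⟨⟨0, hk⟩, Finset.mem_univ _⟩ γ)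
    (β : ℕ → ℝ) (hβ : ∀ t, 1 ≤ t → t ≤ T → β t ∈ Set.Icc (0 : ℝ) 1)
    (η σ : ℕ → ℝ) (hη : ∀ t, 1 ≤ t → 0 < η t)
    (hσ : ∀ t, 1 ≤ t → σ t ∈ Set.Icc (0 : ℝ) 1)
    (a : ℕ → Fin k → ℝ) (ha1 : ∀ i, a 1 i ∈ Set.Icc (0 : ℝ) 1)
    (err : ℕ → Fin k → ℝ)
    (herr : ∀ t i, err t i = if β t < a t i then 1 else 0)
    (harec : ∀ t, 1 ≤ t → ∀ i, a (t + 1) i = a t i + γ i * (α - err t i))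
    (w : ℕ → Fin k → ℝ) (hw1 : ∀ i, w 1 i = 1)
    (hwrec : ∀ t, 1 ≤ t → ∀ i,
      w (t + 1) i = (1 - σ t) * w t i * Real.exp (-(η t) * pinball α (β t) (a t i))
        + σ t / k * ∑ j, w t j * Real.exp (-(η t) * pinball α (β t) (a t j)))
    (p : ℕ → Fin k → ℝ) (hp : ∀ t i, p t i = w t i / ∑ j, w t j) :
    |(1 / (T : ℝ)) * ∑ t ∈ Finset.Icc 1 T, ∑ i, p t i * err t i - α|
      ≤ (1 + 2 * γmax) / ((T : ℝ) * γmin)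
        + ((1 + 2 * γmax) ^ 2 / γmin)
          * ((1 / (T : ℝ)) * ∑ t ∈ Finset.Icc 1 T,
              η t * Real.exp (η t * (1 + 2 * γmax)))
        + 2 * ((1 + γmax) / γmin)
          * ((1 / (T : ℝ)) * ∑ t ∈ Finset.Icc 1 T, σ t) := by
  obtain ⟨hα0, hα1⟩ := hα
  have hne : (Finset.univ : Finset (Fin k)).Nonempty := ⟨⟨0, hk⟩, Finset.mem_univ _⟩
  have hγminle : ∀ i, γmin ≤ γ i := by
    intro i; rw [hγmin]; exact Finset.inf'_le _ (Finset.mem_univ i)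
  have hγmaxge : ∀ i, γ i ≤ γmax := by
    intro i; rw [hγmax]; exact Finset.le_sup' _ (Finset.mem_univ i)
  have hγminpos : 0 < γmin := by
    rw [hγmin]; exact (Finset.lt_inf'_iff _).mpr (fun i _ => hγ i)
  have hγmaxpos : 0 < γmax := lt_of_lt_of_le (hγ ⟨0, hk⟩) (hγmaxge _)
  have hk1 : (1:ℝ) ≤ (k:ℝ) := by exact_mod_cast hk
  have hk0 : (0:ℝ) < (k:ℝ) := by linarith
  have hTpos : (0:ℝ) < (T:ℝ) := by exact_mod_cast hT
  -- bounds on the expert thresholds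
  have habound : ∀ t, 1 ≤ t → t ≤ T + 1 → ∀ i, -(γ i) ≤ a t i ∧ a t i ≤ 1 + γ i := by
    intro t ht
    induction t, ht using Nat.le_induction with
    | base =>
      intro _ i
      obtain ⟨h0, h1⟩ := ha1 i
      have := hγ i
      constructor <;> linarith
    | succ t ht ih =>
      intro htT i
      obtain ⟨hl, hu⟩ := ih (by omega) i
      have hup := harec t ht i
      obtain ⟨hb0, hb1⟩ := hβ t ht (by omega)
      have hγi := hγ i
      rw [herr] at hup
      by_cases hc : β t < a t i
      · rw [if_pos hc] at hup
        constructor <;> nlinarith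
      · rw [if_neg hc] at hup
        push_neg at hc
        constructor <;> nlinarith
  -- telescoping identity
  have htel : ∀ t, t ≤ T → ∀ i,
      a (t + 1) i = a 1 i - γ i * ∑ s ∈ Finset.Icc 1 t, (err s i - α) := by
    intro t
    induction t with
    | zero => intro _ i; simp
    | succ n ih =>
      intro h i
      rw [harec (n + 1) (by omega) i, ih (by omega) i,
        Finset.sum_Icc_succ_top (by omega : (1:ℕ) ≤ n + 1)]
      ring
  -- bound on the partial sums of miscoverage deviations
  have hSbound : ∀ t, t ≤ T → ∀ i,
      |∑ s ∈ Finset.Icc 1 t, (err s i - α)| ≤ (1 + γmax) / γmin := by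
    intro t ht i
    have h1 := htel t ht i
    obtain ⟨hl, hu⟩ := habound (t + 1) (by omega) (by omega) i
    obtain ⟨h10, h11⟩ := ha1 i
    have hγi := hγ i
    have hγil := hγminle i
    have hγiu := hγmaxge i
    rcases le_total 0 (∑ s ∈ Finset.Icc 1 t, (err s i - α)) with hs | hs
    · rw [abs_of_nonneg hs, le_div_iff₀ hγminpos]
      nlinarith [mul_le_mul_of_nonneg_left (hγminle i) hs]
    · rw [abs_of_nonpos hs, le_div_iff₀ hγminpos]
      nlinarith [mul_le_mul_of_nonneg_left (hγminle i) (neg_nonneg.mpr hs)]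
  -- positivity of weights
  have hwpos : ∀ t, 1 ≤ t → ∀ i, 0 < w t i := by
    intro t ht
    induction t, ht using Nat.le_induction with
    | base => intro i; rw [hw1]; norm_num
    | succ t ht ih =>
      intro i
      rw [hwrec t ht i]
      obtain ⟨hσ0, hσ1⟩ := hσ t ht
      have hci : ∀ j, 0 < w t j * Real.exp (-(η t) * pinball α (β t) (a t j)) :=
        fun j => mul_pos (ih j) (Real.exp_pos _)
      have hsum : w t i * Real.exp (-(η t) * pinball α (β t) (a t i))
          ≤ ∑ j, w t j * Real.exp (-(η t) * pinball α (β t) (a t j)) :=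
        Finset.single_le_sum (fun j _ => (hci j).le) (Finset.mem_univ i)
    -- (1-σ)c + (σ/k)Σ ≥ (1-σ+σ/k)c > 0
      have hco : 0 < 1 - σ t + σ t / k := by
        have h6 : (1:ℝ) ≤ (1 - σ t + σ t / k) * k := by
          field_simp
          nlinarith [mul_nonneg (by linarith : (0:ℝ) ≤ (k:ℝ) - 1) (by linarith : (0:ℝ) ≤ 1 - σ t)]
        nlinarith
      nlinarith [mul_pos hco (hci i),
        mul_nonneg (div_nonneg hσ0 hk0.le) (sub_nonneg.mpr hsum)]
  -- probabilities sum to one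
  have hpsum : ∀ t, 1 ≤ t → ∑ i, p t i = 1 := by
    intro t ht
    have hWpos : 0 < ∑ j, w t j := Finset.sum_pos (fun j _ => hwpos t ht j) hne
    simp only [hp]
    rw [← Finset.sum_div, div_self hWpos.ne']
  have hppos : ∀ t, 1 ≤ t → ∀ i, 0 < p t i := by
    intro t ht i
    rw [hp]
    exact div_pos (hwpos t ht i) (Finset.sum_pos (fun j _ => hwpos t ht j) hne)
  -- total-variation step bound
  have htv : ∀ t, 1 ≤ t → t ≤ T →
      ∑ i, |p (t + 1) i - p t i|
        ≤ η t * (1 + 2 * γmax) * Real.exp (η t * (1 + 2 * γmax)) + 2 * σ t := by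
    intro t ht htT
    obtain ⟨hσ0, hσ1⟩ := hσ t ht
    have hηt := hη t ht
    obtain ⟨hb0, hb1⟩ := hβ t ht htT
    set E : Fin k → ℝ := fun j => Real.exp (-(η t) * pinball α (β t) (a t j)) with hE
    set W : ℝ := ∑ j, w t j with hW
    set Z : ℝ := ∑ j, w t j * E j with hZ
    set c : ℝ := η t * (1 + 2 * γmax) with hc
    set eM : ℝ := Real.exp (η t * (1 + 2 * γmax)) with heM
    have hwp : ∀ j, 0 < w t j := hwpos t ht
    have hWpos : 0 < W := Finset.sum_pos (fun j _ => hwp j) hne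
    have hZpos : 0 < Z := Finset.sum_pos (fun j _ => mul_pos (hwp j) (Real.exp_pos _)) hne
    have hcpos : 0 < c := by
      rw [hc]; exact mul_pos hηt (by linarith)
    have heMpos : 0 < eM := Real.exp_pos _
    have hℓ : ∀ j, 0 ≤ pinball α (β t) (a t j) ∧ pinball α (β t) (a t j) ≤ 1 + γmax := by
      intro j
      obtain ⟨hl, hu⟩ := habound t ht (by omega) j
      exact pinball_bounds hα0 hα1 hb0 hb1
        (by linarith [hγmaxge j] : -γmax ≤ a t j) (by linarith [hγmaxge j])
    have hEdiff : ∀ i j, |E i - E j| ≤ c := by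
      intro i j
      have h1 := exp_neg_lip (mul_nonneg hηt.le (hℓ i).1) (mul_nonneg hηt.le (hℓ j).1)
      have e1 : E i = Real.exp (-(η t * pinball α (β t) (a t i))) := by
        rw [hE]; ring_nf
      have e2 : E j = Real.exp (-(η t * pinball α (β t) (a t j))) := by
        rw [hE]; ring_nf
      rw [e1, e2]
      refine h1.trans ?_
      have : η t * pinball α (β t) (a t i) - η t * pinball α (β t) (a t j)
          = η t * (pinball α (β t) (a t i) - pinball α (β t) (a t j)) := by ring
      rw [this, abs_mul, abs_of_pos hηt, hc]
      have habs : |pinball α (β t) (a t i) - pinball α (β t) (a t j)| ≤ 1 + 2 * γmax := by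
        rw [abs_le]
        constructor <;> nlinarith [(hℓ i).1, (hℓ i).2, (hℓ j).1, (hℓ j).2]
      exact mul_le_mul_of_nonneg_left habs hηt.le
    have hZlb : W ≤ Z * eM := by
      rw [hZ, hW, Finset.sum_mul]
      apply Finset.sum_le_sum
      intro j _
      have h1 : (1:ℝ) ≤ E j * eM := by
        rw [hE, heM, ← Real.exp_add]
        apply Real.one_le_exp
        nlinarith [(hℓ j).1, (hℓ j).2]
      nlinarith [hwp j, h1]
    have hqp : ∀ i, |w t i * E i / Z - w t i / W| ≤ p t i * c * eM := by
      intro i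
      have hkey : w t i * E i / Z - w t i / W = w t i * (E i * W - Z) / (Z * W) := by
        field_simp
      have hnum : |E i * W - Z| ≤ W * c := by
        have e3 : E i * W - Z = ∑ j, w t j * (E i - E j) := by
          rw [hZ, hW, Finset.mul_sum, ← Finset.sum_sub_distrib]
          apply Finset.sum_congr rfl
          intro j _; ring
        rw [e3]
        calc |∑ j, w t j * (E i - E j)| ≤ ∑ j, |w t j * (E i - E j)| :=
              Finset.abs_sum_le_sum_abs _ _
          _ ≤ ∑ j, w t j * c := by
              apply Finset.sum_le_sum
              intro j _
              rw [abs_mul, abs_of_pos (hwp j)]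
              exact mul_le_mul_of_nonneg_left (hEdiff i j) (hwp j).le
          _ = W * c := by rw [hW, ← Finset.sum_mul]
      rw [hkey, abs_div, abs_of_pos (mul_pos hZpos hWpos), abs_mul, abs_of_pos (hwp i)]
      have hptw : p t i = w t i / W := by rw [hp, hW]
      rw [hptw]
      rw [div_le_iff₀ (mul_pos hZpos hWpos)]
      have hstep : w t i * (W * c) ≤ w t i / W * c * eM * (Z * W) := by
        have e4 : w t i / W * c * eM * (Z * W) = w t i * c * (eM * Z) := by
          field_simp
        rw [e4]
        nlinarith [mul_pos (mul_pos (hwp i) hcpos) hZpos,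
          mul_nonneg (mul_pos (hwp i) hcpos).le (by linarith : (0:ℝ) ≤ eM * Z - W)]
      calc w t i * |E i * W - Z| ≤ w t i * (W * c) :=
            mul_le_mul_of_nonneg_left hnum (hwp i).le
        _ ≤ w t i / W * c * eM * (Z * W) := hstep
    have hwrec' : ∀ i, w (t + 1) i = (1 - σ t) * (w t i * E i) + σ t / k * Z := by
      intro i
      rw [hwrec t ht i]
      simp only [hE, hZ]
      ring
    have hZsum : ∑ j, w (t + 1) j = Z := by
      simp only [hwrec']
      rw [Finset.sum_add_distrib, ← Finset.mul_sum, Finset.sum_const, Finset.card_univ,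
        Fintype.card_fin, nsmul_eq_mul, ← hZ]
      field_simp
      ring
    have hp1 : ∀ i, p (t + 1) i = (1 - σ t) * (w t i * E i / Z) + σ t / k := by
      intro i
      rw [hp, hZsum, hwrec' i, add_div]
      have e9 : σ t / ↑k * Z / Z = σ t / ↑k := by
        rw [mul_div_assoc, div_self hZpos.ne', mul_one]
      rw [e9, mul_div_assoc]
    have hdiff : ∀ i, |p (t + 1) i - p t i|
        ≤ |w t i * E i / Z - w t i / W| + σ t * (1 / k + p t i) := by
      intro i
      have hptw : p t i = w t i / W := by rw [hp, hW]
      have e1 : p (t + 1) i - p t i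
          = (1 - σ t) * (w t i * E i / Z - w t i / W) + σ t * (1 / k - w t i / W) := by
        rw [hp1 i, hptw]; ring
      rw [e1]
      refine (abs_add_le _ _).trans ?_
      rw [abs_mul, abs_mul, abs_of_nonneg (by linarith : (0:ℝ) ≤ 1 - σ t),
        abs_of_nonneg hσ0]
      have h2 : |1 / (k:ℝ) - w t i / W| ≤ 1 / k + w t i / W := by
        refine (abs_sub _ _).trans ?_
        rw [abs_of_nonneg (by positivity : (0:ℝ) ≤ 1 / (k:ℝ)),
          abs_of_nonneg (div_nonneg (hwp i).le hWpos.le)]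
      have h3 : (1 - σ t) * |w t i * E i / Z - w t i / W| ≤ |w t i * E i / Z - w t i / W| := by
        nlinarith [abs_nonneg (w t i * E i / Z - w t i / W)]
      rw [hptw]
      nlinarith [h2, hσ0]
    calc ∑ i, |p (t + 1) i - p t i|
        ≤ ∑ i, (|w t i * E i / Z - w t i / W| + σ t * (1 / k + p t i)) :=
          Finset.sum_le_sum (fun i _ => hdiff i)
      _ ≤ ∑ i, (p t i * c * eM + σ t * (1 / k + p t i)) := by
          apply Finset.sum_le_sum
          intro i _
          have := hqp i
          linarith
      _ = c * eM + 2 * σ t := by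
          rw [Finset.sum_add_distrib, ← Finset.mul_sum, Finset.sum_add_distrib,
            Finset.sum_const, Finset.card_univ, Fintype.card_fin, nsmul_eq_mul,
            hpsum t ht]
          have e5 : ∑ i, p t i * c * eM = (∑ i, p t i) * c * eM := by
            rw [Finset.sum_mul, Finset.sum_mul]
          rw [e5, hpsum t ht]
          field_simp
          ring
      _ = η t * (1 + 2 * γmax) * Real.exp (η t * (1 + 2 * γmax)) + 2 * σ t := by
          rw [hc, heM]
  -- main assembly
  set S : ℕ → Fin k → ℝ := fun t i => ∑ s ∈ Finset.Icc 1 t, (err s i - α) with hSdef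
  set X : ℝ := (∑ t ∈ Finset.Icc 1 T, ∑ i, p t i * err t i) - T * α with hX
  have hXeq : X = (∑ i, p T i * S T i)
      - ∑ t ∈ Finset.Icc 1 (T - 1), ∑ i, (p (t + 1) i - p t i) * S t i := by
    have e1 : X = ∑ t ∈ Finset.Icc 1 T, ∑ i, p t i * (err t i - α) := by
      rw [hX]
      have e2 : ∀ t ∈ Finset.Icc 1 T, ∑ i, p t i * (err t i - α)
          = (∑ i, p t i * err t i) - α := by
        intro t htm
        obtain ⟨ht1, -⟩ := Finset.mem_Icc.mp htm
        simp only [mul_sub]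
        rw [Finset.sum_sub_distrib, ← Finset.sum_mul, hpsum t ht1, one_mul]
      rw [Finset.sum_congr rfl e2, Finset.sum_sub_distrib, Finset.sum_const,
        Nat.card_Icc, nsmul_eq_mul]
      simp
    rw [e1, Finset.sum_comm]
    have e3 : ∀ i : Fin k, ∑ t ∈ Finset.Icc 1 T, p t i * (err t i - α)
        = p T i * S T i - ∑ t ∈ Finset.Icc 1 (T - 1), (p (t + 1) i - p t i) * S t i := by
      intro i
      exact abel_sum (fun t => p t i) (fun t => err t i - α) T hT
    rw [Finset.sum_congr rfl (fun i _ => e3 i), Finset.sum_sub_distrib, Finset.sum_comm]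
  have hXbound : |X| ≤ (1 + γmax) / γmin
      + (1 + γmax) / γmin * ∑ t ∈ Finset.Icc 1 T,
          (η t * (1 + 2 * γmax) * Real.exp (η t * (1 + 2 * γmax)))
      + 2 * ((1 + γmax) / γmin) * ∑ t ∈ Finset.Icc 1 T, σ t := by
    have hB0 : (0:ℝ) ≤ (1 + γmax) / γmin := by positivity
    have h1 : |∑ i, p T i * S T i| ≤ (1 + γmax) / γmin := by
      refine (Finset.abs_sum_le_sum_abs _ _).trans ?_
      calc ∑ i, |p T i * S T i| ≤ ∑ i, p T i * ((1 + γmax) / γmin) := by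
            apply Finset.sum_le_sum
            intro i _
            rw [abs_mul, abs_of_pos (hppos T hT i)]
            exact mul_le_mul_of_nonneg_left (hSbound T le_rfl i) (hppos T hT i).le
        _ = (1 + γmax) / γmin := by rw [← Finset.sum_mul, hpsum T hT, one_mul]
    have h2 : |∑ t ∈ Finset.Icc 1 (T - 1), ∑ i, (p (t + 1) i - p t i) * S t i|
        ≤ (1 + γmax) / γmin * ∑ t ∈ Finset.Icc 1 (T - 1),
            (η t * (1 + 2 * γmax) * Real.exp (η t * (1 + 2 * γmax)) + 2 * σ t) := by
      refine (Finset.abs_sum_le_sum_abs _ _).trans ?_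
      rw [Finset.mul_sum]
      apply Finset.sum_le_sum
      intro t htm
      obtain ⟨ht1, ht2⟩ := Finset.mem_Icc.mp htm
      have htT : t ≤ T := by omega
      refine (Finset.abs_sum_le_sum_abs _ _).trans ?_
      calc ∑ i, |(p (t + 1) i - p t i) * S t i|
          ≤ ∑ i, |p (t + 1) i - p t i| * ((1 + γmax) / γmin) := by
            apply Finset.sum_le_sum
            intro i _
            rw [abs_mul]
            exact mul_le_mul_of_nonneg_left (hSbound t htT i) (abs_nonneg _)
        _ = (∑ i, |p (t + 1) i - p t i|) * ((1 + γmax) / γmin) := by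
            rw [Finset.sum_mul]
        _ ≤ (η t * (1 + 2 * γmax) * Real.exp (η t * (1 + 2 * γmax)) + 2 * σ t)
              * ((1 + γmax) / γmin) :=
            mul_le_mul_of_nonneg_right (htv t ht1 htT) hB0
        _ = (1 + γmax) / γmin
              * (η t * (1 + 2 * γmax) * Real.exp (η t * (1 + 2 * γmax)) + 2 * σ t) := by
            ring
    have h3 : ∑ t ∈ Finset.Icc 1 (T - 1),
          (η t * (1 + 2 * γmax) * Real.exp (η t * (1 + 2 * γmax)) + 2 * σ t)
        ≤ ∑ t ∈ Finset.Icc 1 T,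
          (η t * (1 + 2 * γmax) * Real.exp (η t * (1 + 2 * γmax)) + 2 * σ t) := by
      apply Finset.sum_le_sum_of_subset_of_nonneg
      · exact Finset.Icc_subset_Icc_right (by omega)
      · intro t htm _
        obtain ⟨ht1, -⟩ := Finset.mem_Icc.mp htm
        have h6 : 0 ≤ η t * (1 + 2 * γmax) * Real.exp (η t * (1 + 2 * γmax)) :=
          mul_nonneg (mul_nonneg (hη t ht1).le (by linarith)) (Real.exp_pos _).le
        linarith [(hσ t ht1).1]
    have h4 : ∑ t ∈ Finset.Icc 1 T,
          (η t * (1 + 2 * γmax) * Real.exp (η t * (1 + 2 * γmax)) + 2 * σ t)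
        = (∑ t ∈ Finset.Icc 1 T, η t * (1 + 2 * γmax) * Real.exp (η t * (1 + 2 * γmax)))
          + 2 * ∑ t ∈ Finset.Icc 1 T, σ t := by
      rw [Finset.sum_add_distrib, Finset.mul_sum]
    rw [hXeq]
    refine (abs_sub _ _).trans ?_
    have h5 := h2.trans (mul_le_mul_of_nonneg_left h3 hB0)
    rw [h4] at h5
    nlinarith [h1, h5]
  -- final arithmetic
  have hA : (0:ℝ) ≤ ∑ t ∈ Finset.Icc 1 T, η t * Real.exp (η t * (1 + 2 * γmax)) := by
    apply Finset.sum_nonneg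
    intro t htm
    obtain ⟨ht1, -⟩ := Finset.mem_Icc.mp htm
    exact mul_nonneg (hη t ht1).le (Real.exp_pos _).le
  have hσA : (0:ℝ) ≤ ∑ t ∈ Finset.Icc 1 T, σ t := by
    apply Finset.sum_nonneg
    intro t htm
    obtain ⟨ht1, -⟩ := Finset.mem_Icc.mp htm
    exact (hσ t ht1).1
  have e0 : (1 / (T : ℝ)) * (∑ t ∈ Finset.Icc 1 T, ∑ i, p t i * err t i) - α
      = (1 / (T : ℝ)) * X := by
    rw [hX]
    field_simp
  rw [e0, abs_mul, abs_of_nonneg (by positivity : (0:ℝ) ≤ 1 / (T:ℝ))]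
  have hsum_eq : ∑ t ∈ Finset.Icc 1 T, η t * (1 + 2 * γmax) * Real.exp (η t * (1 + 2 * γmax))
      = (1 + 2 * γmax) * ∑ t ∈ Finset.Icc 1 T, η t * Real.exp (η t * (1 + 2 * γmax)) := by
    rw [Finset.mul_sum]
    apply Finset.sum_congr rfl
    intro t _
    ring
  rw [hsum_eq] at hXbound
  have hc1 : (1 + γmax) / γmin ≤ (1 + 2 * γmax) / γmin :=
    (div_le_div_iff_of_pos_right hγminpos).mpr (by linarith)
  have hc2 : (1 + γmax) / γmin * (1 + 2 * γmax) ≤ (1 + 2 * γmax) ^ 2 / γmin := by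
    rw [div_mul_eq_mul_div]
    exact (div_le_div_iff_of_pos_right hγminpos).mpr (by nlinarith)
  have hterm2 : (1 + γmax) / γmin
        * ((1 + 2 * γmax) * ∑ t ∈ Finset.Icc 1 T, η t * Real.exp (η t * (1 + 2 * γmax)))
      ≤ (1 + 2 * γmax) ^ 2 / γmin
        * ∑ t ∈ Finset.Icc 1 T, η t * Real.exp (η t * (1 + 2 * γmax)) := by
    calc (1 + γmax) / γmin
          * ((1 + 2 * γmax) * ∑ t ∈ Finset.Icc 1 T, η t * Real.exp (η t * (1 + 2 * γmax)))
        = ((1 + γmax) / γmin * (1 + 2 * γmax))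
          * ∑ t ∈ Finset.Icc 1 T, η t * Real.exp (η t * (1 + 2 * γmax)) := by ring
      _ ≤ (1 + 2 * γmax) ^ 2 / γmin
          * ∑ t ∈ Finset.Icc 1 T, η t * Real.exp (η t * (1 + 2 * γmax)) :=
        mul_le_mul_of_nonneg_right hc2 hA
  have hQ2 : |X| ≤ (1 + 2 * γmax) / γmin
      + ((1 + 2 * γmax) ^ 2 / γmin)
          * ∑ t ∈ Finset.Icc 1 T, η t * Real.exp (η t * (1 + 2 * γmax))
      + 2 * ((1 + γmax) / γmin) * ∑ t ∈ Finset.Icc 1 T, σ t := by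
    linarith [hXbound, hterm2, hc1]
  calc 1 / (T:ℝ) * |X|
      ≤ 1 / (T:ℝ) * ((1 + 2 * γmax) / γmin
        + ((1 + 2 * γmax) ^ 2 / γmin)
            * ∑ t ∈ Finset.Icc 1 T, η t * Real.exp (η t * (1 + 2 * γmax))
        + 2 * ((1 + γmax) / γmin) * ∑ t ∈ Finset.Icc 1 T, σ t) :=
      mul_le_mul_of_nonneg_left hQ2 (by positivity)
    _ = (1 + 2 * γmax) / ((T : ℝ) * γmin)
        + ((1 + 2 * γmax) ^ 2 / γmin)
          * ((1 / (T : ℝ)) * ∑ t ∈ Finset.Icc 1 T,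
              η t * Real.exp (η t * (1 + 2 * γmax)))
        + 2 * ((1 + γmax) / γmin)
          * ((1 / (T : ℝ)) * ∑ t ∈ Finset.Icc 1 T, σ t) := by
      field_simp
end

section
/- Let k ≥ 1, let p₁,…,p_k be nonnegative reals with Σ_i p_i = 1, let ℓ₁,…,ℓ_k ∈ ℝ, let η ≥ 0, and define p̃_i := p_i·exp(−η ℓ_i) / Σ_{j=1}^k p_j·exp(−η ℓ_j). Then (i) p̃_i − p_i = p_i·Σ_{i'=1}^k p̃_{i'}·(exp(η(ℓ_{i'} − ℓ_i)) − 1) for every i, and (ii) if |ℓ_{i'} − ℓ_i| ≤ B for all i, i' and some B ≥ 0, then |p̃_i − p_i| ≤ p_i·η·B·exp(ηB) for every i. -/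
/-- Stability of one step of the exponential-reweighting update (from the proof of
Theorem 6 of the paper): with `p̃_i := p_i exp(−η ℓ_i) / ∑_j p_j exp(−η ℓ_j)`,
(i) `p̃_i − p_i = p_i ∑_{i'} p̃_{i'} (exp(η(ℓ_{i'} − ℓ_i)) − 1)`, and
(ii) if the losses have spread at most `B`, then `|p̃_i − p_i| ≤ p_i η B exp(ηB)`. -/
theorem exp_reweighting_stability
    (k : ℕ) (hk : 1 ≤ k)
    (p : Fin k → ℝ) (hp0 : ∀ i, 0 ≤ p i) (hp1 : ∑ i, p i = 1)
    (ℓ : Fin k → ℝ) (η : ℝ) (hη : 0 ≤ η)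
    (ptil : Fin k → ℝ)
    (hptil : ∀ i, ptil i
      = p i * Real.exp (-η * ℓ i) / ∑ j, p j * Real.exp (-η * ℓ j)) :
    (∀ i, ptil i - p i
      = p i * ∑ i', ptil i' * (Real.exp (η * (ℓ i' - ℓ i)) - 1)) ∧
    (∀ B : ℝ, 0 ≤ B → (∀ i i', |ℓ i' - ℓ i| ≤ B) →
      ∀ i, |ptil i - p i| ≤ p i * η * B * Real.exp (η * B)) := by
  set Z := ∑ j, p j * Real.exp (-η * ℓ j) with hZ
  have hterm : ∀ j, 0 ≤ p j * Real.exp (-η * ℓ j) := fun j =>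
    mul_nonneg (hp0 j) (Real.exp_pos _).le
  have hex : ∃ i, 0 < p i := by
    by_contra h
    push_neg at h
    have : ∑ i, p i ≤ 0 := Finset.sum_nonpos (fun i _ => h i)
    linarith
  have hZpos : 0 < Z := by
    obtain ⟨i0, hi0⟩ := hex
    exact Finset.sum_pos' (fun j _ => hterm j)
      ⟨i0, Finset.mem_univ _, mul_pos hi0 (Real.exp_pos _)⟩
  have hptil0 : ∀ i, 0 ≤ ptil i := fun i => by
    rw [hptil i]; exact div_nonneg (hterm i) hZpos.le
  have hsum1 : ∑ i, ptil i = 1 := by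
    simp_rw [hptil]
    rw [← Finset.sum_div, ← hZ, div_self hZpos.ne']
  have key : ∀ i, ptil i - p i
      = p i * ∑ i', ptil i' * (Real.exp (η * (ℓ i' - ℓ i)) - 1) := by
    intro i
    have h1 : ∀ i', ptil i' * (Real.exp (η * (ℓ i' - ℓ i)) - 1)
        = p i' * Real.exp (-η * ℓ i) / Z - ptil i' := by
      intro i'
      rw [hptil i', mul_sub, mul_one]
      congr 1
      rw [div_mul_eq_mul_div, mul_assoc, ← Real.exp_add]
      ring_nf
    rw [Finset.sum_congr rfl (fun i' _ => h1 i'), Finset.sum_sub_distrib,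
      hsum1, ← Finset.sum_div, ← Finset.sum_mul, hp1, one_mul, hptil i]
    field_simp
  refine ⟨key, ?_⟩
  intro B hB hspread i
  rw [key i, abs_mul, abs_of_nonneg (hp0 i)]
  have hbound : ∀ i', |Real.exp (η * (ℓ i' - ℓ i)) - 1|
      ≤ η * B * Real.exp (η * B) := by
    intro i'
    have hx : |η * (ℓ i' - ℓ i)| ≤ η * B := by
      rw [abs_mul, abs_of_nonneg hη]
      exact mul_le_mul_of_nonneg_left (hspread i i') hη
    have h2 : Real.exp (η * (ℓ i' - ℓ i)) ≤ Real.exp (η * B) :=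
      Real.exp_le_exp.mpr (le_of_abs_le hx)
    have haux := Real.add_one_le_exp (-(η * B))
    have hinv : Real.exp (-(η * B)) * Real.exp (η * B) = 1 := by
      rw [← Real.exp_add]; simp
    have h1 : Real.exp (η * (ℓ i' - ℓ i)) - 1 ≤ η * B * Real.exp (η * B) := by
      nlinarith [Real.exp_pos (η * B)]
    have hge : -(η * B) ≤ η * (ℓ i' - ℓ i) := neg_le_of_abs_le hx
    have hone : (1 : ℝ) ≤ Real.exp (η * B) := Real.one_le_exp (mul_nonneg hη hB)
    have h3 : -(η * B * Real.exp (η * B)) ≤ Real.exp (η * (ℓ i' - ℓ i)) - 1 := by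
      have := Real.add_one_le_exp (η * (ℓ i' - ℓ i))
      nlinarith [mul_nonneg hη hB]
    rw [abs_le]; exact ⟨h3, h1⟩
  have hmain : |∑ i', ptil i' * (Real.exp (η * (ℓ i' - ℓ i)) - 1)|
      ≤ η * B * Real.exp (η * B) := by
    calc |∑ i', ptil i' * (Real.exp (η * (ℓ i' - ℓ i)) - 1)|
        ≤ ∑ i', |ptil i' * (Real.exp (η * (ℓ i' - ℓ i)) - 1)| :=
          Finset.abs_sum_le_sum_abs _ _
      _ ≤ ∑ i', ptil i' * (η * B * Real.exp (η * B)) := by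
          apply Finset.sum_le_sum
          intro i' _
          rw [abs_mul, abs_of_nonneg (hptil0 i')]
          exact mul_le_mul_of_nonneg_left (hbound i') (hptil0 i')
      _ = η * B * Real.exp (η * B) := by
          rw [← Finset.sum_mul, hsum1, one_mul]
  calc p i * |∑ i', ptil i' * (Real.exp (η * (ℓ i' - ℓ i)) - 1)|
      ≤ p i * (η * B * Real.exp (η * B)) :=
        mul_le_mul_of_nonneg_left hmain (hp0 i)
    _ = p i * η * B * Real.exp (η * B) := by ring
end
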